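/- arXiv:1405.1615 — 3 statements merged into one kernel-verified Lean document; each statement's English description precedes it below -/
import Mathlib

section
/- In a multi-player perfect-information game with probabilistic transitions, countable state space, nonempty finite action sets, and bounded continuous payoff functions, the values v_i(s) of the zero-sum subgames G_i(s) exist and satisfy, for every state s ∈ S: v_{i(s)}(s) = max_{a∈A(s)} v_{i(s)}(s,a), and for every player j ∈ N∖{i(s)}: v_j(s) = min_{a∈A(s)} v_j(s,a), where v_i(s,a) = ∑_{z∈S(s,a)} q(s,a)(z)·v_i(z). -/
open MeasureTheory

/-- A multi-player perfect-information game with probabilistic transitions: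
a set of players `N`, a state space `S` with initial state `init`, a controlling
player `ctrl s` and a nonempty finite action set `act s` for every state `s`, and
a transition probability measure `q s a` for every state `s` and action `a`.
The supports of the transition measures are mutually disjoint and every state is
reachable from the initial state, so every state is reached from `init` via
exactly one finite history (states correspond bijectively to histories). -/
structure PGame (N S A : Type*) where
  init : S
  ctrl : S → N
  act : S → Finset A
  act_nonempty : ∀ s, (act s).Nonempty
  q : S → A → PMF S
  unique_pred : ∀ z s a s' a', a ∈ act s → a' ∈ act s' →
    z ∈ (q s a).support → z ∈ (q s' a').support → s = s' ∧ a = a'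
  init_not_succ : ∀ s a, a ∈ act s → init ∉ (q s a).support
  reach : ∀ z, Relation.ReflTransGen (fun s t => ∃ a ∈ act s, t ∈ (q s a).support) init z

namespace PGame

variable {N S A : Type*} (G : PGame N S A)

/-- A play: an infinite alternating sequence of states and actions, starting at the
initial state, choosing legal actions and moving to successor states. -/
def IsPlay (p : ℕ → S × A) : Prop :=
  (p 0).1 = G.init ∧
    ∀ m, (p m).2 ∈ G.act (p m).1 ∧ (p (m + 1)).1 ∈ (G.q (p m).1 (p m).2).support

/-- The set of plays of the game. -/
def Play : Type _ := { p : ℕ → S × A // G.IsPlay p }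

/-- The set of plays carries the topology generated by the cylinder sets, i.e. the
topology induced by the product of the discrete topologies. -/
instance : TopologicalSpace G.Play :=
  letI : TopologicalSpace S := ⊥
  letI : TopologicalSpace A := ⊥
  inferInstanceAs (TopologicalSpace { p : ℕ → S × A // G.IsPlay p })

/-- The Borel σ-algebra on plays. -/
instance : MeasurableSpace G.Play := borel G.Play

/-- A strategy of player `i`: a choice of a legal action in every state controlled
by `i`. -/
def Strat (i : N) : Type _ := { f : S → A // ∀ s, G.ctrl s = i → f s ∈ G.act s }

/-- A strategy profile. -/
def Profile : Type _ := ∀ i : N, G.Strat i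

/-- The profile `σ` with player `i`'s strategy replaced by `τi`. -/
noncomputable def comb (i : N) (τi : G.Strat i) (σ : G.Profile) : G.Profile :=
  haveI := Classical.decEq N
  Function.update σ i τi

/-- The action that profile `σ` plays in state `s`. -/
def playFun (σ : G.Profile) (s : S) : A := (σ (G.ctrl s)).1 s

/-- The cylinder set of plays agreeing with the play `p0` on the first `n`
coordinates. -/
def cylSet (p0 : G.Play) (n : ℕ) : Set G.Play := { p : G.Play | ∀ m < n, p.1 m = p0.1 m }

open Classical in
/-- `μ` is the family of Borel probability measures on plays induced by the strategy
profiles via the Ionescu–Tulcea construction applied to `q`; it is uniquely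
characterized by the probabilities it assigns to the cylinder sets: actions are
chosen deterministically according to the profile and states are drawn from the
transition probabilities. -/
def IsInducedMeasure (μ : G.Profile → Measure G.Play) : Prop :=
  (∀ σ, IsProbabilityMeasure (μ σ)) ∧
    ∀ (σ : G.Profile) (p0 : G.Play) (n : ℕ),
      μ σ (G.cylSet p0 n) =
        ∏ m ∈ Finset.range n,
          ((if (p0.1 m).2 = G.playFun σ (p0.1 m).1 then 1 else 0) *
            (if m + 1 < n then G.q (p0.1 m).1 (p0.1 m).2 ((p0.1 (m + 1)).1) else 1))

/-- Expected payoff of player `i` under the profile `σ`: the integral of `u i`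
against the induced measure. -/
noncomputable def epay (μ : G.Profile → Measure G.Play) (u : N → G.Play → ℝ)
    (σ : G.Profile) (i : N) : ℝ :=
  ∫ p, u i p ∂(μ σ)

/-- Nash equilibrium: no player can improve his expected payoff by a unilateral
deviation. -/
def IsNash (μ : G.Profile → Measure G.Play) (u : N → G.Play → ℝ) (σ : G.Profile) : Prop :=
  ∀ (i : N) (τi : G.Strat i), G.epay μ u (G.comb i τi σ) i ≤ G.epay μ u σ i

/-- Secure equilibrium: a Nash equilibrium such that no player `i` has a deviation
keeping his own expected payoff equal, making all opponents weakly worse off, and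
making some opponent strictly worse off. -/
def IsSecure (μ : G.Profile → Measure G.Play) (u : N → G.Play → ℝ) (σ : G.Profile) : Prop :=
  G.IsNash μ u σ ∧
    ¬ ∃ (i : N) (τi : G.Strat i),
        G.epay μ u (G.comb i τi σ) i = G.epay μ u σ i ∧
        (∀ j : N, j ≠ i → G.epay μ u (G.comb i τi σ) j ≤ G.epay μ u σ j) ∧
        (∃ k : N, k ≠ i ∧ G.epay μ u (G.comb i τi σ) k < G.epay μ u σ k)

/-- One-step successor relation between states. -/
def step (s t : S) : Prop := ∃ a ∈ G.act s, t ∈ (G.q s a).support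

/-- The set of plays that pass through the state `s` (i.e. the plays extending the
unique history from the initial state to `s`). -/
def through (s : S) : Set G.Play := { p : G.Play | ∃ n, (p.1 n).1 = s }

/-- `E` is the family of subgame expected payoffs: `E σ s i` is the expected payoff
`u_i(σ|s)` of player `i` in the subgame `G(s)` starting from state `s`, under the
profile `σ`.  It is characterized as follows: `E σ s i` only depends on the actions
of `σ` in the subtree rooted at `s`, and for any profile `τ` agreeing with `σ`
there, the integral of `u_i` over the set of plays through `s` under the measure
induced by `τ` equals `E σ s i` times the probability of reaching `s` under `τ`. -/
def IsSubgamePayoff (μ : G.Profile → Measure G.Play) (u : N → G.Play → ℝ)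
    (E : G.Profile → S → N → ℝ) : Prop :=
  ∀ (σ τ : G.Profile) (s : S) (i : N),
    (∀ z, Relation.ReflTransGen G.step s z → G.playFun τ z = G.playFun σ z) →
    ∫ p in G.through s, u i p ∂(μ τ) = E σ s i * (μ τ (G.through s)).toReal
/-- The value `v_i(s)` of the zero-sum subgame `G_i(s)`, in which player `i`
maximizes the expectation of `u_i` and the coalition of his opponents jointly
minimizes it (defined as the `sup inf`; the theorem asserts that it coincides
with the `inf sup`). -/
noncomputable def val (E : G.Profile → S → N → ℝ) (s : S) (i : N) : ℝ :=
  ⨆ τi : G.Strat i, ⨅ τo : G.Profile, E (G.comb i τi τo) s i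

/-- `v_i(s,a) = ∑_{z ∈ S(s,a)} q(s,a)(z) · v_i(z)`: the expected value for player
`i` if action `a` is chosen in state `s`. -/
noncomputable def valQ (E : G.Profile → S → N → ℝ) (s : S) (a : A) (i : N) : ℝ :=
  ∑' z : S, ((G.q s a) z).toReal * G.val E z i

end PGame

namespace PGame

open Relation

section Aux

variable {N S A : Type*} {G : PGame N S A}

/-- An arbitrary continuation of the play from a given state. -/
noncomputable def ext (G : PGame N S A) (s : S) : ℕ → S × A
  | 0 => ⟨s, (G.act_nonempty s).choose⟩
  | (k+1) =>
      let prev := G.ext s k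
      let z := (G.q prev.1 prev.2).support_nonempty.choose
      ⟨z, (G.act_nonempty z).choose⟩

lemma ext_zero (s : S) : (G.ext s 0).1 = s := rfl

lemma ext_act (s : S) (k : ℕ) : (G.ext s k).2 ∈ G.act (G.ext s k).1 := by
  cases k with
  | zero => exact (G.act_nonempty s).choose_spec
  | succ k => exact (G.act_nonempty _).choose_spec

lemma ext_supp (s : S) (k : ℕ) :
    (G.ext s (k+1)).1 ∈ (G.q (G.ext s k).1 (G.ext s k).2).support :=
  (G.q (G.ext s k).1 (G.ext s k).2).support_nonempty.choose_spec

/-- There exists a play. -/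
lemma exists_play (G : PGame N S A) : Nonempty G.Play := by
  refine ⟨⟨G.ext G.init, rfl, fun m => ⟨G.ext_act _ _, G.ext_supp _ _⟩⟩⟩

/-- Splicing: modify a play from time `n` on, choosing action `b` at time `n` and
moving to `z`. -/
lemma exists_play_splice (p : G.Play) (n : ℕ) (b : A) (hb : b ∈ G.act (p.1 n).1)
    (z : S) (hz : z ∈ (G.q (p.1 n).1 b).support) :
    ∃ p' : G.Play, (∀ m < n, p'.1 m = p.1 m) ∧ p'.1 n = ((p.1 n).1, b) ∧
      (p'.1 (n+1)).1 = z := by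
  classical
  refine ⟨⟨fun m => if m < n then p.1 m else if m = n then ((p.1 n).1, b)
      else G.ext z (m - (n+1)), ?_, ?_⟩, ?_, ?_, ?_⟩
  · rcases Nat.eq_zero_or_pos n with h | h
    · subst h; simp; exact p.2.1
    · simpa [h] using p.2.1
  · intro m
    rcases lt_trichotomy m n with hm | hm | hm
    · rcases eq_or_lt_of_le (Nat.succ_le_of_lt hm) with h1 | h1
      · constructor
        · simp only [if_pos hm]; exact (p.2.2 m).1
        · simp only [if_pos hm, if_neg (lt_irrefl n), h1, if_pos rfl]
          simpa [← h1] using (p.2.2 m).2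
      · constructor
        · simp only [if_pos hm]; exact (p.2.2 m).1
        · simp only [if_pos hm, if_pos h1]; exact (p.2.2 m).2
    · subst hm
      constructor
      · simp only [if_neg (lt_irrefl m), if_pos rfl]; exact hb
      · simp only [if_neg (lt_irrefl m), if_pos rfl,
          if_neg (Nat.not_lt.mpr (Nat.le_succ m)), if_neg (Nat.succ_ne_self m).symm]
        simpa [Nat.sub_self, ext_zero] using hz
    · have h1 : ¬ m < n := Nat.not_lt.mpr hm.le
      have h2 : m ≠ n := hm.ne'
      have h3 : ¬ m + 1 < n := by omega
      have h4 : m + 1 ≠ n := by omega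
      simp only [if_neg h1, if_neg h2, if_neg h3, if_neg h4]
      have e1 : m + 1 - (n+1) = (m - (n+1)) + 1 := by omega
      rw [e1]
      exact ⟨G.ext_act _ _, G.ext_supp _ _⟩
  · intro m hm; simp [if_pos hm]
  · simp
  · simp only [Nat.not_lt.mpr (Nat.le_succ n)]
    have h3 : ¬ n + 1 < n := by omega
    have h4 : n + 1 ≠ n := by omega
    simp only [if_neg h3, if_neg h4, Nat.add_sub_cancel, if_neg (by omega : ¬ n+1 < n)]
    simp [Nat.sub_self]
    rfl

end Aux

end PGame
namespace PGame

open Relation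

section Aux2

variable {N S A : Type*} {G : PGame N S A}

/-- Every state is visited by some play. -/
lemma exists_play_state (G : PGame N S A) (s : S) :
    ∃ (p : G.Play) (n : ℕ), (p.1 n).1 = s := by
  have h := G.reach s
  induction h with
  | refl => exact ⟨G.exists_play.some, 0, G.exists_play.some.2.1⟩
  | tail hyz hstep ih =>
      obtain ⟨p, n, hp⟩ := ih
      obtain ⟨a, ha, hz⟩ := hstep
      rw [← hp] at ha hz
      obtain ⟨p', _, _, h3⟩ := exists_play_splice p n a ha _ hz
      exact ⟨p', n+1, h3⟩

/-- Every pair (state, legal action) is realized by some play. -/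
lemma exists_play_pair (G : PGame N S A) (s : S) (b : A) (hb : b ∈ G.act s) :
    ∃ (p : G.Play) (n : ℕ), p.1 n = (s, b) := by
  obtain ⟨p, n, hp⟩ := G.exists_play_state s
  rw [← hp] at hb
  obtain ⟨p', _, h2, _⟩ := exists_play_splice p n b hb _
    (G.q (p.1 n).1 b).support_nonempty.choose_spec
  exact ⟨p', n, by rw [h2, hp]⟩

/-- Uniqueness of histories: two plays that are at the same state at time `n`
agree on all earlier coordinates. -/
lemma play_agree {p q : G.Play} :
    ∀ n, (p.1 n).1 = (q.1 n).1 → ∀ m < n, p.1 m = q.1 m := by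
  intro n
  induction n with
  | zero => intro _ m hm; omega
  | succ n ih =>
      intro h m hm
      have h1 := (p.2.2 n).2
      have h2 := (q.2.2 n).2
      rw [h] at h1
      have := G.unique_pred _ _ _ _ _ (p.2.2 n).1 (q.2.2 n).1 h1 h2
      have hpq : p.1 n = q.1 n := Prod.ext this.1 this.2
      rcases Nat.lt_succ_iff_lt_or_eq.mp hm with hm' | hm'
      · exact ih (by rw [hpq]) m hm'
      · rwa [hm']

/-- Uniqueness of depth: a state occurs at a unique time in any play. -/
lemma play_depth_unique {p q : G.Play} :
    ∀ n m, (p.1 n).1 = (q.1 m).1 → n = m := by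
  intro n
  induction n with
  | zero =>
      intro m h
      cases m with
      | zero => rfl
      | succ m =>
          exfalso
          have h2 := (q.2.2 m).2
          rw [← h, p.2.1] at h2
          exact G.init_not_succ _ _ (q.2.2 m).1 h2
  | succ n ih =>
      intro m h
      cases m with
      | zero =>
          exfalso
          have h2 := (p.2.2 n).2
          rw [h, q.2.1] at h2
          exact G.init_not_succ _ _ (p.2.2 n).1 h2
      | succ m =>
          have h1 := (p.2.2 n).2
          have h2 := (q.2.2 m).2
          rw [h] at h1
          have := G.unique_pred _ _ _ _ _ (p.2.2 n).1 (q.2.2 m).1 h1 h2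
          rw [ih m this.1]

/-- A play through `s` (chosen once and for all). -/
noncomputable def hp (G : PGame N S A) (s : S) : G.Play :=
  (G.exists_play_state s).choose

/-- The depth of a state: the unique time at which it is visited. -/
noncomputable def dep (G : PGame N S A) (s : S) : ℕ :=
  (G.exists_play_state s).choose_spec.choose

lemma hp_dep (s : S) : ((G.hp s).1 (G.dep s)).1 = s :=
  (G.exists_play_state s).choose_spec.choose_spec

lemma dep_eq {p : G.Play} {n : ℕ} {s : S} (h : (p.1 n).1 = s) : n = G.dep s :=
  play_depth_unique n (G.dep s) (by rw [h, hp_dep])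

lemma dep_init : G.dep G.init = 0 :=
  (dep_eq (G.exists_play.some.2.1)).symm

lemma dep_step {s z : S} (h : G.step s z) : G.dep z = G.dep s + 1 := by
  obtain ⟨a, ha, hz⟩ := h
  obtain ⟨p, n, hp⟩ := G.exists_play_state s
  rw [← hp] at ha hz
  obtain ⟨p', _, _, h3⟩ := exists_play_splice p n a ha _ hz
  rw [← dep_eq h3, ← dep_eq hp]

lemma dep_mono {s z : S} (h : Relation.ReflTransGen G.step s z) : G.dep s ≤ G.dep z := by
  induction h with
  | refl => exact le_refl _
  | tail _ hstep ih => rw [dep_step hstep]; omega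

/-- Ancestors at the same depth coincide. -/
lemma step_parent_unique {c c' x : S} (h : G.step c x) (h' : G.step c' x) : c = c' := by
  obtain ⟨a, ha, hx⟩ := h
  obtain ⟨a', ha', hx'⟩ := h'
  exact (G.unique_pred _ _ _ _ _ ha ha' hx hx').1

/-- Ancestors at the same depth coincide. -/
lemma anc_unique : ∀ (n : ℕ) {x y z : S}, G.dep x = n → Relation.ReflTransGen G.step y x →
    Relation.ReflTransGen G.step z x → G.dep y = G.dep z → y = z := by
  intro n
  induction n using Nat.strong_induction_on with
  | _ n ih =>
      intro x y z hxn hy hz hyz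
      rcases hy.cases_tail with hyx | ⟨c, hyc, hcx⟩
      · rcases hz.cases_tail with hzx | ⟨c', hzc, hcx'⟩
        · rw [← hyx, ← hzx]
        · exfalso
          have h1 : G.dep z ≤ G.dep c' := dep_mono hzc
          have h2 : G.dep x = G.dep c' + 1 := dep_step hcx'
          rw [← hyx] at hyz
          omega
      · rcases hz.cases_tail with hzx | ⟨c', hzc, hcx'⟩
        · exfalso
          have h1 : G.dep y ≤ G.dep c := dep_mono hyc
          have h2 : G.dep x = G.dep c + 1 := dep_step hcx
          rw [← hzx] at hyz
          omega
        · have hcc : c = c' := step_parent_unique hcx hcx'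
          subst hcc
          have h2 : G.dep x = G.dep c + 1 := dep_step hcx
          exact ih (G.dep c) (by omega) rfl hyc hzc hyz

end Aux2

end PGame
namespace PGame

section Aux3

variable {N S A : Type*} {G : PGame N S A}

instance : BorelSpace G.Play := ⟨rfl⟩

lemma isOpen_coord (k : ℕ) (c : S × A) : IsOpen {p : G.Play | p.1 k = c} := by
  letI : TopologicalSpace S := ⊥
  letI : TopologicalSpace A := ⊥
  haveI : DiscreteTopology S := ⟨rfl⟩
  haveI : DiscreteTopology A := ⟨rfl⟩
  have h1 : IsOpen {f : ℕ → S × A | f k = c} := by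
    have he : {f : ℕ → S × A | f k = c} = (fun f => f k) ⁻¹' {c} := rfl
    rw [he]
    exact (continuous_apply k).isOpen_preimage _ (isOpen_discrete _)
  exact h1.preimage continuous_subtype_val

lemma measurableSet_coord (k : ℕ) (c : S × A) :
    MeasurableSet {p : G.Play | p.1 k = c} :=
  (isOpen_coord k c).measurableSet

lemma fstCoord_eq (k : ℕ) (x : S) :
    {p : G.Play | (p.1 k).1 = x} = ⋃ b ∈ G.act x, {p : G.Play | p.1 k = (x, b)} := by
  ext p
  simp only [Set.mem_setOf_eq, Set.mem_iUnion]
  constructor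
  · intro h
    refine ⟨(p.1 k).2, ?_, ?_⟩
    · rw [← h]; exact (p.2.2 k).1
    · rw [← h]
  · rintro ⟨b, _, hb⟩
    rw [hb]

lemma measurableSet_fstCoord (k : ℕ) (x : S) :
    MeasurableSet {p : G.Play | (p.1 k).1 = x} := by
  rw [fstCoord_eq]
  exact (G.act x).measurableSet_biUnion (fun b _ => measurableSet_coord k (x, b))

lemma measurable_comp_fst [Countable S] (k : ℕ) (f : S → ℝ) :
    Measurable fun p : G.Play => f ((p.1 k).1) := by
  intro B hB
  have he : (fun p : G.Play => f ((p.1 k).1)) ⁻¹' B =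
      ⋃ (x : S) (_ : f x ∈ B), {p : G.Play | (p.1 k).1 = x} := by
    ext p
    simp only [Set.mem_preimage, Set.mem_iUnion, Set.mem_setOf_eq]
    exact ⟨fun h => ⟨_, h, rfl⟩, by rintro ⟨x, h1, h2⟩; rw [h2]; exact h1⟩
  rw [he]
  exact MeasurableSet.iUnion fun x => MeasurableSet.iUnion fun _ => measurableSet_fstCoord k x

lemma measurableSet_cylSet (p0 : G.Play) (n : ℕ) : MeasurableSet (G.cylSet p0 n) := by
  have he : G.cylSet p0 n = ⋂ m ∈ Finset.range n, {p : G.Play | p.1 m = p0.1 m} := by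
    ext p
    simp [cylSet, Finset.mem_range]
  rw [he]
  exact (Finset.range n).measurableSet_biInter (fun m _ => measurableSet_coord m (p0.1 m))

lemma through_eq (s : S) : G.through s = {p : G.Play | (p.1 (G.dep s)).1 = s} := by
  ext p
  constructor
  · rintro ⟨n, hn⟩
    have := dep_eq hn
    subst this
    exact hn
  · intro h
    exact ⟨_, h⟩

lemma measurableSet_through (s : S) : MeasurableSet (G.through s) := by
  rw [through_eq]
  exact measurableSet_fstCoord _ s

end Aux3

end PGame
namespace PGame

section Aux4

variable {N S A : Type*} {G : PGame N S A}

lemma playFun_mem (σ : G.Profile) (s : S) : G.playFun σ s ∈ G.act s :=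
  (σ (G.ctrl s)).2 s rfl

/-- The set of plays that are at state `s` with action `b` at time `dep s`. -/
def cylPt (G : PGame N S A) (s : S) (b : A) : Set G.Play :=
  {p : G.Play | p.1 (G.dep s) = (s, b)}

lemma measurableSet_cylPt (s : S) (b : A) : MeasurableSet (G.cylPt s b) :=
  measurableSet_coord _ _

lemma cylPt_eq_cylSet {s : S} {b : A} (p0 : G.Play) (h : p0.1 (G.dep s) = (s, b)) :
    G.cylPt s b = G.cylSet p0 (G.dep s + 1) := by
  ext p
  constructor
  · intro hp
    intro m hm
    rcases Nat.lt_succ_iff_lt_or_eq.mp hm with hm' | hm'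
    · exact play_agree (G.dep s) (by rw [hp, h]) m hm'
    · rw [hm', hp, h]
  · intro hp
    have := hp (G.dep s) (Nat.lt_succ_self _)
    show p.1 (G.dep s) = (s, b)
    rw [this, h]

lemma prodSplit (g h : ℕ → ENNReal) (n : ℕ) :
    ∏ m ∈ Finset.range n, (g m * if m + 1 < n then h m else 1)
      = (∏ m ∈ Finset.range n, g m) * ∏ m ∈ Finset.range (n - 1), h m := by
  cases n with
  | zero => simp
  | succ n =>
      rw [Finset.prod_range_succ]
      have h1 : ∀ m ∈ Finset.range n, (g m * if m + 1 < n + 1 then h m else 1) = g m * h m := by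
        intro m hm
        rw [if_pos (by simpa using Finset.mem_range.mp hm)]
      rw [Finset.prod_congr rfl h1, if_neg (by omega), mul_one, Finset.prod_mul_distrib,
        Finset.prod_range_succ, Nat.add_sub_cancel]
      ring

variable {μ : G.Profile → Measure G.Play} (hμ : G.IsInducedMeasure μ)

include hμ

open Classical in
lemma cylPt_measure {s : S} {b : A} (p0 : G.Play) (h : p0.1 (G.dep s) = (s, b)) (τ : G.Profile) :
    μ τ (G.cylPt s b) =
      ((∏ m ∈ Finset.range (G.dep s + 1),
          if (p0.1 m).2 = G.playFun τ (p0.1 m).1 then 1 else 0) *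
        ∏ m ∈ Finset.range (G.dep s),
          G.q (p0.1 m).1 (p0.1 m).2 ((p0.1 (m + 1)).1)) := by
  rw [cylPt_eq_cylSet p0 h, hμ.2 τ p0 (G.dep s + 1), prodSplit, Nat.add_sub_cancel]

lemma cylPt_measure_ne {s : S} {b : A} (hb : b ∈ G.act s) (τ : G.Profile)
    (hne : b ≠ G.playFun τ s) : μ τ (G.cylPt s b) = 0 := by
  classical
  obtain ⟨p0, n, hp0⟩ := G.exists_play_pair s b hb
  have hn : n = G.dep s := dep_eq (by rw [hp0])
  subst hn
  rw [cylPt_measure hμ p0 hp0 τ]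
  have hzero : (if (p0.1 (G.dep s)).2 = G.playFun τ (p0.1 (G.dep s)).1
      then (1:ENNReal) else 0) = 0 := by
    rw [hp0]
    exact if_neg hne
  rw [Finset.prod_eq_zero (Finset.self_mem_range_succ (G.dep s)) hzero, zero_mul]

omit hμ in
lemma through_eq_union (s : S) : G.through s = ⋃ b ∈ G.act s, G.cylPt s b := by
  rw [through_eq]
  ext p
  simp only [Set.mem_setOf_eq, Set.mem_iUnion, cylPt]
  constructor
  · intro h
    refine ⟨(p.1 (G.dep s)).2, ?_, Prod.ext h rfl⟩
    have := (p.2.2 (G.dep s)).1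
    rw [h] at this
    exact this
  · rintro ⟨b, _, hb⟩
    rw [hb]

omit hμ in
lemma cylPt_disj (s : S) : (↑(G.act s) : Set A).PairwiseDisjoint (fun b => G.cylPt s b) := by
  intro b _ b' _ hne
  simp only [Function.onFun, Set.disjoint_left]
  intro p hp hp'
  apply hne
  have h1 : (s, b) = (s, b') := by rw [← hp, ← hp']
  exact ((Prod.mk.injEq _ _ _ _).mp h1).2

lemma through_measure (s : S) (τ : G.Profile) :
    μ τ (G.through s) = μ τ (G.cylPt s (G.playFun τ s)) := by
  classical
  rw [through_eq_union, measure_biUnion_finset (cylPt_disj s)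
    (fun b _ => measurableSet_cylPt s b)]
  rw [Finset.sum_eq_single (G.playFun τ s)]
  · intro b hb hne
    exact cylPt_measure_ne hμ hb τ hne
  · intro h
    exact absurd (playFun_mem τ s) h

lemma through_init_measure (τ : G.Profile) : μ τ (G.through G.init) = 1 := by
  have he : G.through G.init = Set.univ := by
    ext p
    simp only [Set.mem_univ, iff_true]
    exact ⟨0, p.2.1⟩
  rw [he]
  haveI := hμ.1 τ
  exact measure_univ

open Classical in
lemma through_measure_step {s z : S} {b : A} (hb : b ∈ G.act s) (hz : z ∈ (G.q s b).support)
    (τ : G.Profile) :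
    μ τ (G.through z) =
      μ τ (G.through s) * (if b = G.playFun τ s then 1 else 0) * G.q s b z := by
  classical
  have hdz : G.dep z = G.dep s + 1 := dep_step ⟨b, hb, hz⟩
  obtain ⟨p1, n, hp1⟩ := G.exists_play_pair z (G.playFun τ z) (playFun_mem τ z)
  have hn : n = G.dep z := dep_eq (by rw [hp1])
  subst hn
  have hedge := (p1.2.2 (G.dep s)).2
  have hz1 : (p1.1 (G.dep s + 1)).1 = z := by rw [← hdz, hp1]
  rw [hz1] at hedge
  have huniq := G.unique_pred z _ _ _ _ (p1.2.2 (G.dep s)).1 hb hedge hz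
  have hp1s : p1.1 (G.dep s) = (s, b) := Prod.ext huniq.1 huniq.2
  rcases eq_or_ne b (G.playFun τ s) with hbe | hbe
  · rw [if_pos hbe, mul_one, through_measure hμ s τ, through_measure hμ z τ, ← hbe]
    rw [cylPt_measure hμ (s := z) p1 hp1 τ]
    rw [cylPt_measure hμ (s := s) p1 hp1s τ]
    rw [hdz]
    rw [Finset.prod_range_succ (n := G.dep s + 1) (f := fun m =>
      if (p1.1 m).2 = G.playFun τ (p1.1 m).1 then (1:ENNReal) else 0),
      Finset.prod_range_succ (n := G.dep s) (f := fun m =>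
      G.q (p1.1 m).1 (p1.1 m).2 ((p1.1 (m + 1)).1))]
    have e1 : (if (p1.1 (G.dep s + 1)).2 = G.playFun τ (p1.1 (G.dep s + 1)).1
        then (1:ENNReal) else 0) = 1 := by
      rw [← hdz, hp1]
      exact if_pos rfl
    have e2 : G.q (p1.1 (G.dep s)).1 (p1.1 (G.dep s)).2 ((p1.1 (G.dep s + 1)).1)
        = G.q s b z := by
      rw [hp1s, hz1]
    rw [e1, e2]
    ring
  · rw [if_neg hbe, mul_zero, zero_mul]
    rw [through_measure hμ z τ, cylPt_measure hμ (s := z) p1 hp1 τ]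
    have hmem : G.dep s ∈ Finset.range (G.dep z + 1) := by
      rw [hdz]
      exact Finset.mem_range.mpr (by omega)
    have hzero : (if (p1.1 (G.dep s)).2 = G.playFun τ (p1.1 (G.dep s)).1
        then (1:ENNReal) else 0) = 0 := by
      rw [hp1s]
      exact if_neg hbe
    rw [Finset.prod_eq_zero hmem hzero, zero_mul]

end Aux4

end PGame
namespace PGame

section Aux5

variable {N S A : Type*} {G : PGame N S A}

open Relation

open Classical in
/-- Patch a profile so that the unique history leading to `s` is followed, while
keeping the original behaviour in the subtree rooted at `s`. -/
noncomputable def pathPatch (G : PGame N S A) (σ : G.Profile) (s : S) : G.Profile := fun j =>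
  ⟨fun x => if h : ∃ m, m < G.dep s ∧ ((G.hp s).1 m).1 = x
      then ((G.hp s).1 h.choose).2 else (σ j).1 x, by
    intro x hx
    classical
    dsimp only
    by_cases h : ∃ m, m < G.dep s ∧ ((G.hp s).1 m).1 = x
    · rw [dif_pos h]
      have hmem := ((G.hp s).2.2 h.choose).1
      rwa [h.choose_spec.2] at hmem
    · rw [dif_neg h]
      exact (σ j).2 x hx⟩

lemma pathPatch_agree (σ : G.Profile) (s : S) {z : S}
    (hz : ReflTransGen G.step s z) (j : N) :
    ((G.pathPatch σ s) j).1 z = (σ j).1 z := by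
  have h : ¬ ∃ m, m < G.dep s ∧ ((G.hp s).1 m).1 = z := by
    rintro ⟨m, hm, he⟩
    have h1 : m = G.dep z := dep_eq he
    have h2 : G.dep s ≤ G.dep z := dep_mono hz
    omega
  simp only [pathPatch, dif_neg h]

lemma pathPatch_playFun (σ : G.Profile) (s : S) {z : S}
    (hz : ReflTransGen G.step s z) :
    G.playFun (G.pathPatch σ s) z = G.playFun σ z :=
  pathPatch_agree σ s hz (G.ctrl z)

lemma pathPatch_on_path (σ : G.Profile) (s : S) {m : ℕ} (hm : m < G.dep s) :
    G.playFun (G.pathPatch σ s) (((G.hp s).1 m).1) = ((G.hp s).1 m).2 := by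
  have h : ∃ m', m' < G.dep s ∧ ((G.hp s).1 m').1 = ((G.hp s).1 m).1 := ⟨m, hm, rfl⟩
  show ((G.pathPatch σ s) _).1 _ = _
  simp only [pathPatch, dif_pos h]
  have hms : h.choose = m := play_depth_unique _ _ h.choose_spec.2
  rw [hms]

variable {μ : G.Profile → Measure G.Play} (hμ : G.IsInducedMeasure μ)

include hμ

lemma pathPatch_pos (σ : G.Profile) (s : S) :
    μ (G.pathPatch σ s) (G.through s) ≠ 0 := by
  set τ := G.pathPatch σ s with hτ
  have key : ∀ m, m ≤ G.dep s → μ τ (G.through (((G.hp s).1 m).1)) ≠ 0 := by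
    intro m
    induction m with
    | zero =>
        intro _
        have h0 : ((G.hp s).1 0).1 = G.init := (G.hp s).2.1
        rw [h0, through_init_measure hμ τ]
        exact one_ne_zero
    | succ m ih =>
        intro hm
        have hact := ((G.hp s).2.2 m).1
        have hsupp := ((G.hp s).2.2 m).2
        rw [through_measure_step hμ hact hsupp τ]
        have hplay : ((G.hp s).1 m).2 = G.playFun τ (((G.hp s).1 m).1) :=
          (pathPatch_on_path σ s (by omega)).symm
        rw [if_pos hplay, mul_one]
        exact mul_ne_zero (ih (by omega)) (PMF.mem_support_iff _ _ |>.mp hsupp)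
  have := key (G.dep s) le_rfl
  rwa [hp_dep] at this

lemma through_ne_top (τ : G.Profile) (s : S) : μ τ (G.through s) ≠ ⊤ := by
  haveI := hμ.1 τ
  exact measure_ne_top _ _

lemma pathPatch_toReal_pos (σ : G.Profile) (s : S) :
    0 < (μ (G.pathPatch σ s) (G.through s)).toReal := by
  rw [ENNReal.toReal_pos_iff]
  exact ⟨pos_iff_ne_zero.mpr (pathPatch_pos hμ σ s),
    lt_top_iff_ne_top.mpr (through_ne_top hμ _ s)⟩

end Aux5

end PGame
namespace PGame

section Aux6

open Relation MeasureTheory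

variable {N S A : Type*} [Countable S] {G : PGame N S A}
variable {μ : G.Profile → Measure G.Play} (hμ : G.IsInducedMeasure μ)

lemma summable_q (s : S) (a : A) : Summable (fun z => (G.q s a z).toReal) :=
  ENNReal.summable_toReal (by rw [(G.q s a).tsum_coe]; exact ENNReal.one_ne_top)

lemma tsum_q (s : S) (a : A) : ∑' z : S, (G.q s a z).toReal = 1 := by
  rw [← ENNReal.tsum_toReal_eq (fun z => PMF.apply_ne_top _ _), (G.q s a).tsum_coe,
    ENNReal.toReal_one]

lemma summable_q_mul (s : S) (a : A) (f : S → ℝ) (C : ℝ) (hf : ∀ z, |f z| ≤ C) :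
    Summable (fun z => (G.q s a z).toReal * f z) := by
  have hs : Summable (fun z => (G.q s a z).toReal * C) :=
    (summable_q (G := G) s a).mul_right C
  refine Summable.of_abs (Summable.of_nonneg_of_le (fun z => abs_nonneg _) (fun z => ?_) hs)
  rw [abs_mul, abs_of_nonneg ENNReal.toReal_nonneg]
  exact mul_le_mul_of_nonneg_left (hf z) ENNReal.toReal_nonneg

include hμ

lemma integrable_of_bdd {g : G.Play → ℝ} (hm : Measurable g) {C : ℝ}
    (hb : ∀ p, |g p| ≤ C) (τ : G.Profile) : Integrable g (μ τ) := by
  haveI := hμ.1 τ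
  refine Integrable.mono' (integrable_const C) hm.aestronglyMeasurable ?_
  exact Filter.Eventually.of_forall (fun p => by simpa [Real.norm_eq_abs] using hb p)

/-- The decomposition of an integral over the plays through `s` into the integrals
over the plays through the successors of `s`. -/
lemma integral_through_decomp {g : G.Play → ℝ} (hm : Measurable g) {C : ℝ}
    (hb : ∀ p, |g p| ≤ C) (τ : G.Profile) (s : S) :
    ∫ p in G.through s, g p ∂(μ τ) =
      ∑' z : ↥(G.q s (G.playFun τ s)).support, ∫ p in G.through z.1, g p ∂(μ τ) := by
  classical
  set a := G.playFun τ s with ha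
  have hstep : ∀ z : S, z ∈ (G.q s a).support → G.step s z :=
    fun z hz => ⟨a, playFun_mem τ s, hz⟩
  have hsub : (⋃ z : ↥(G.q s a).support, G.through z.1) ⊆ G.through s := by
    intro p hp
    obtain ⟨z, hp⟩ := Set.mem_iUnion.mp hp
    have hp' : p ∈ G.through z.1 := hp
    rw [through_eq] at hp' ⊢
    have hdz : G.dep z.1 = G.dep s + 1 := dep_step (hstep z.1 z.2)
    rw [hdz] at hp'
    have hedge := (p.2.2 (G.dep s)).2
    rw [hp'] at hedge
    exact (G.unique_pred z.1 _ _ _ _ (p.2.2 (G.dep s)).1 (playFun_mem τ s) hedge z.2).1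
  have hdisj : Pairwise (Function.onFun Disjoint
      (fun z : ↥(G.q s a).support => G.through z.1)) := by
    intro z1 z2 hne
    simp only [Function.onFun, Set.disjoint_left]
    intro p hp1 hp2
    apply hne
    rw [through_eq] at hp1 hp2
    have hd1 : G.dep z1.1 = G.dep s + 1 := dep_step (hstep z1.1 z1.2)
    have hd2 : G.dep z2.1 = G.dep s + 1 := dep_step (hstep z2.1 z2.2)
    rw [hd1] at hp1
    rw [hd2] at hp2
    exact Subtype.ext (by rw [← hp1, ← hp2])
  have hnull : μ τ (G.through s \ ⋃ z : ↥(G.q s a).support, G.through z.1) = 0 := by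
    have hsubnull : G.through s \ (⋃ z : ↥(G.q s a).support, G.through z.1) ⊆
        ⋃ b ∈ (↑((G.act s).erase a) : Set A), G.cylPt s b := by
      rintro p ⟨hp, hnp⟩
      rw [through_eq] at hp
      by_cases hcon : (p.1 (G.dep s)).2 = a
      · exfalso
        apply hnp
        have hedge := (p.2.2 (G.dep s)).2
        rw [hp, hcon] at hedge
        refine Set.mem_iUnion.mpr ⟨⟨_, hedge⟩, ?_⟩
        show p ∈ G.through ((p.1 (G.dep s + 1)).1)
        rw [through_eq]
        have hde : G.dep ((p.1 (G.dep s + 1)).1) = G.dep s + 1 := (dep_eq rfl).symm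
        rw [hde]
        exact Set.mem_setOf_eq ▸ rfl
      · have hact : (p.1 (G.dep s)).2 ∈ G.act s := by
          have := (p.2.2 (G.dep s)).1
          rwa [hp] at this
        refine Set.mem_biUnion (Finset.mem_coe.mpr (Finset.mem_erase.mpr ⟨hcon, hact⟩)) ?_
        show p.1 (G.dep s) = (s, (p.1 (G.dep s)).2)
        exact Prod.ext hp rfl
    refine measure_mono_null hsubnull ?_
    rw [measure_biUnion_null_iff (Set.Finite.countable (Finset.finite_toSet _))]
    intro b hbmem
    have hbmem' := Finset.mem_coe.mp hbmem
    exact cylPt_measure_ne hμ (Finset.mem_of_mem_erase hbmem') τ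
      (Finset.ne_of_mem_erase hbmem')
  have hae : G.through s =ᵐ[μ τ] ⋃ z : ↥(G.q s a).support, G.through z.1 := by
    rw [MeasureTheory.ae_eq_set]
    constructor
    · exact hnull
    · rw [Set.diff_eq_empty.mpr hsub]
      exact measure_empty
  rw [MeasureTheory.setIntegral_congr_set hae]
  exact integral_iUnion (fun z => measurableSet_through z.1) hdisj
    ((integrable_of_bdd hμ hm hb τ).integrableOn)

variable {u : N → G.Play → ℝ} {E : G.Profile → S → N → ℝ} (hE : G.IsSubgamePayoff μ u E)

include hE

/-- `E σ s i` only depends on the actions of `σ` in the subtree rooted at `s`. -/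
lemma E_eq {σ τ : G.Profile} {s : S} (i : N)
    (h : ∀ z, ReflTransGen G.step s z → G.playFun σ z = G.playFun τ z) :
    E σ s i = E τ s i := by
  have h1 := hE σ (G.pathPatch σ s) s i (fun z hz => pathPatch_playFun σ s hz)
  have h2 := hE τ (G.pathPatch σ s) s i (fun z hz => (pathPatch_playFun σ s hz).trans (h z hz))
  have hc : (μ (G.pathPatch σ s) (G.through s)).toReal ≠ 0 :=
    ne_of_gt (pathPatch_toReal_pos hμ σ s)
  exact mul_right_cancel₀ hc (h1.symm.trans h2)

lemma E_le {σ : G.Profile} {s : S} {i : N} (hm : Measurable (u i)) {C M : ℝ}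
    (hb : ∀ p, |u i p| ≤ C) (hub : ∀ p ∈ G.through s, u i p ≤ M) : E σ s i ≤ M := by
  set τ := G.pathPatch σ s with hτ
  have h1 := hE σ τ s i (fun z hz => pathPatch_playFun σ s hz)
  have hc := pathPatch_toReal_pos hμ σ s
  have h2 : ∫ p in G.through s, u i p ∂(μ τ) ≤ ∫ p in G.through s, M ∂(μ τ) := by
    refine setIntegral_mono_on ((integrable_of_bdd hμ hm hb τ).integrableOn)
      (integrableOn_const ?_) (measurableSet_through s) hub
    haveI := hμ.1 τ
    exact measure_ne_top _ _
  rw [setIntegral_const, smul_eq_mul, measureReal_def] at h2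
  rw [h1] at h2
  exact le_of_mul_le_mul_right (by rw [mul_comm (E σ s i)] at h2; linarith) hc

end Aux6

end PGame
namespace PGame

section Aux7

open Relation MeasureTheory

variable {N S A : Type*} [Countable S] {G : PGame N S A}
variable {μ : G.Profile → Measure G.Play} (hμ : G.IsInducedMeasure μ)
variable {u : N → G.Play → ℝ} {E : G.Profile → S → N → ℝ} (hE : G.IsSubgamePayoff μ u E)

omit [Countable S] in
lemma through_nonempty (s : S) : (G.through s).Nonempty := by
  obtain ⟨p, n, hp⟩ := G.exists_play_state s
  exact ⟨p, n, hp⟩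

include hμ hE

lemma E_ge {σ : G.Profile} {s : S} {i : N} (hm : Measurable (u i)) {C m : ℝ}
    (hb : ∀ p, |u i p| ≤ C) (hlb : ∀ p ∈ G.through s, m ≤ u i p) : m ≤ E σ s i := by
  set τ := G.pathPatch σ s with hτ
  have h1 := hE σ τ s i (fun z hz => pathPatch_playFun σ s hz)
  have hc := pathPatch_toReal_pos hμ σ s
  have h2 : ∫ p in G.through s, m ∂(μ τ) ≤ ∫ p in G.through s, u i p ∂(μ τ) := by
    refine setIntegral_mono_on (integrableOn_const ?_)
      ((integrable_of_bdd hμ hm hb τ).integrableOn) (measurableSet_through s) hlb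
    haveI := hμ.1 τ
    exact measure_ne_top _ _
  rw [setIntegral_const, smul_eq_mul, measureReal_def] at h2
  rw [h1] at h2
  exact le_of_mul_le_mul_right (by linarith) hc

lemma E_abs_le {σ : G.Profile} {s : S} {i : N} (hm : Measurable (u i)) {C : ℝ}
    (hb : ∀ p, |u i p| ≤ C) : |E σ s i| ≤ C := by
  rw [abs_le]
  constructor
  · exact E_ge hμ hE hm hb (fun p _ => neg_le_of_abs_le (hb p))
  · exact E_le hμ hE hm hb (fun p _ => le_of_abs_le (hb p))

/-- The one-step Bellman equation for the subgame payoffs. -/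
lemma E_step {σ : G.Profile} {s : S} {i : N} (hm : Measurable (u i)) {C : ℝ}
    (hb : ∀ p, |u i p| ≤ C) :
    E σ s i = ∑' z : S, (G.q s (G.playFun σ s) z).toReal * E σ z i := by
  classical
  set τ := G.pathPatch σ s with hτ
  have haτ : G.playFun τ s = G.playFun σ s := pathPatch_playFun σ s ReflTransGen.refl
  have hdec := integral_through_decomp hμ hm hb τ s
  have hLHS := hE σ τ s i (fun z hz => pathPatch_playFun σ s hz)
  set a := G.playFun σ s with ha
  set c := (μ τ (G.through s)).toReal with hc
  have hcpos : 0 < c := pathPatch_toReal_pos hμ σ s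
  have hterm : ∀ z : ↥(G.q s (G.playFun τ s)).support,
      ∫ p in G.through z.1, u i p ∂(μ τ) = c * ((G.q s a z.1).toReal * E σ z.1 i) := by
    intro z
    have hzsupp : z.1 ∈ (G.q s a).support := by rw [← haτ]; exact z.2
    have hstep : G.step s z.1 := ⟨a, by rw [ha]; exact playFun_mem σ s, hzsupp⟩
    have hagree : ∀ z', ReflTransGen G.step z.1 z' → G.playFun τ z' = G.playFun σ z' :=
      fun z' hz' => pathPatch_playFun σ s ((ReflTransGen.single hstep).trans hz')
    have h1 := hE σ τ z.1 i hagree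
    have h2 : μ τ (G.through z.1) = μ τ (G.through s) * G.q s a z.1 := by
      rw [through_measure_step hμ (by rw [ha]; exact playFun_mem σ s) hzsupp τ,
        if_pos haτ.symm, mul_one]
    rw [h1, h2, ENNReal.toReal_mul]
    ring
  rw [hLHS] at hdec
  rw [tsum_congr hterm, tsum_mul_left] at hdec
  have hmain : E σ s i = ∑' z : ↥(G.q s (G.playFun τ s)).support,
      (G.q s a z.1).toReal * E σ z.1 i := by
    have := hdec
    rw [mul_comm (E σ s i) c] at this
    exact mul_left_cancel₀ (ne_of_gt hcpos) this
  rw [hmain, haτ]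
  refine tsum_subtype_eq_of_support_subset
    (f := fun z => (G.q s a z).toReal * E σ z i) (s := (G.q s a).support) ?_
  intro z hz
  simp only [Function.mem_support, ne_eq] at hz
  refine PMF.mem_support_iff _ _ |>.mpr fun h0 => hz ?_
  rw [h0, ENNReal.toReal_zero, zero_mul]

end Aux7

end PGame
namespace PGame

section Aux8

open Relation MeasureTheory

variable {N S A : Type*} [Countable S] {G : PGame N S A}
variable {μ : G.Profile → Measure G.Play} (hμ : G.IsInducedMeasure μ)
variable {u : N → G.Play → ℝ} {E : G.Profile → S → N → ℝ} (hE : G.IsSubgamePayoff μ u E)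

omit [Countable S] in
lemma subtree_ne_root {s z x : S} (hz : G.step s z) (hx : ReflTransGen G.step z x) :
    x ≠ s := by
  intro h
  have h1 : G.dep z = G.dep s + 1 := dep_step hz
  have h2 : G.dep z ≤ G.dep x := dep_mono hx
  rw [h] at h2
  omega

open Classical in
/-- Update the action taken at the single state `s` to `a`. -/
noncomputable def actUpdate (G : PGame N S A) (σ : G.Profile) (s : S) (a : A)
    (ha : a ∈ G.act s) : G.Profile := fun j =>
  ⟨fun x => if x = s then a else (σ j).1 x, by
    intro x hx
    dsimp only
    by_cases h : x = s
    · rw [if_pos h, h]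
      exact ha
    · rw [if_neg h]
      exact (σ j).2 x hx⟩

open Classical in
lemma actUpdate_playFun_self {σ : G.Profile} {s : S} {a : A} (ha : a ∈ G.act s) :
    G.playFun (G.actUpdate σ s a ha) s = a := by
  show (if s = s then a else (σ (G.ctrl s)).1 s) = a
  rw [if_pos rfl]

open Classical in
lemma actUpdate_playFun_ne {σ : G.Profile} {s : S} {a : A} (ha : a ∈ G.act s)
    {x : S} (hx : x ≠ s) : G.playFun (G.actUpdate σ s a ha) x = G.playFun σ x := by
  show (if x = s then a else (σ (G.ctrl x)).1 x) = (σ (G.ctrl x)).1 x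
  rw [if_neg hx]

include hμ hE

/-- The one-step deviation formula. -/
lemma E_dev {σ : G.Profile} {s : S} {i : N} (hm : Measurable (u i)) {C : ℝ}
    (hb : ∀ p, |u i p| ≤ C) {a : A} (ha : a ∈ G.act s) :
    E (G.actUpdate σ s a ha) s i = ∑' z : S, (G.q s a z).toReal * E σ z i := by
  rw [E_step hμ hE hm hb, actUpdate_playFun_self ha]
  refine tsum_congr fun z => ?_
  by_cases hzs : z ∈ (G.q s a).support
  · have hstep : G.step s z := ⟨a, ha, hzs⟩
    have heq : E (G.actUpdate σ s a ha) z i = E σ z i :=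
      E_eq hμ hE i (fun x hx => actUpdate_playFun_ne ha (subtree_ne_root hstep hx))
    rw [heq]
  · have h0 : G.q s a z = 0 := PMF.apply_eq_zero_iff _ _ |>.mpr hzs
    rw [h0, ENNReal.toReal_zero, zero_mul, zero_mul]

end Aux8

section RealHelpers

lemma bddAbove_of_abs {ι : Sort*} {f : ι → ℝ} {C : ℝ} (h : ∀ x, |f x| ≤ C) :
    BddAbove (Set.range f) :=
  ⟨C, by rintro y ⟨x, rfl⟩; exact le_of_abs_le (h x)⟩

lemma bddBelow_of_abs {ι : Sort*} {f : ι → ℝ} {C : ℝ} (h : ∀ x, |f x| ≤ C) :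
    BddBelow (Set.range f) :=
  ⟨-C, by rintro y ⟨x, rfl⟩; exact neg_le_of_abs_le (h x)⟩

lemma abs_ciSup_le {ι : Sort*} [Nonempty ι] {f : ι → ℝ} {C : ℝ} (h : ∀ x, |f x| ≤ C)
    (hC : 0 ≤ C) : |⨆ x, f x| ≤ C := by
  rw [abs_le]
  constructor
  · exact le_trans (neg_le_of_abs_le (h (Classical.arbitrary ι)))
      (le_ciSup (bddAbove_of_abs h) _)
  · exact ciSup_le fun x => le_of_abs_le (h x)

lemma abs_ciInf_le {ι : Sort*} [Nonempty ι] {f : ι → ℝ} {C : ℝ} (h : ∀ x, |f x| ≤ C)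
    (hC : 0 ≤ C) : |⨅ x, f x| ≤ C := by
  rw [abs_le]
  constructor
  · exact le_ciInf fun x => neg_le_of_abs_le (h x)
  · exact le_trans (ciInf_le (bddBelow_of_abs h) (Classical.arbitrary ι))
      (le_of_abs_le (h _))

end RealHelpers

section Aux8b

variable {N S A : Type*} {G : PGame N S A}

instance stratNonempty (i : N) : Nonempty (G.Strat i) :=
  ⟨⟨fun s => (G.act_nonempty s).choose, fun s _ => (G.act_nonempty s).choose_spec⟩⟩

instance profileNonempty : Nonempty G.Profile :=
  ⟨fun i => Classical.arbitrary _⟩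

lemma comb_playFun_eq {i : N} {τi : G.Strat i} {τo : G.Profile} {s : S}
    (h : G.ctrl s = i) : G.playFun (G.comb i τi τo) s = τi.1 s := by
  haveI := Classical.decEq N
  unfold playFun comb
  rw [h]
  exact congrArg (fun t : G.Strat i => t.1 s) (@Function.update_self N (fun j => G.Strat j) (Classical.decEq N) i τi τo)

lemma comb_playFun_ne {i : N} {τi : G.Strat i} {τo : G.Profile} {s : S}
    (h : G.ctrl s ≠ i) : G.playFun (G.comb i τi τo) s = G.playFun τo s := by
  unfold playFun comb
  simp only [Function.update]
  rw [dif_neg h]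

end Aux8b

end PGame
namespace PGame

section Aux9

open Relation

variable {N S A : Type*} {G : PGame N S A}

lemma child_unique {s z z' x : S} (h1 : G.step s z) (h2 : ReflTransGen G.step z x)
    (h1' : G.step s z') (h2' : ReflTransGen G.step z' x) : z = z' :=
  anc_unique (G.dep x) rfl h2 h2' (by rw [dep_step h1, dep_step h1'])

open Classical in
/-- Patch a strategy: play `a` at `s`, in the subtree rooted at a successor `z`
of `s` play according to `F z`, elsewhere play `t0`. -/
noncomputable def stratPatch (G : PGame N S A) (i : N) (s : S) (a : A) (ha : a ∈ G.act s)
    (F : S → G.Strat i) (t0 : G.Strat i) : G.Strat i :=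
  ⟨fun x => if x = s then a
     else if h : ∃ z, G.step s z ∧ ReflTransGen G.step z x then (F h.choose).1 x
     else t0.1 x, by
    intro x hx
    dsimp only
    by_cases h1 : x = s
    · rw [if_pos h1, h1]
      exact ha
    · rw [if_neg h1]
      by_cases h2 : ∃ z, G.step s z ∧ ReflTransGen G.step z x
      · rw [dif_pos h2]
        exact (F h2.choose).2 x hx
      · rw [dif_neg h2]
        exact t0.2 x hx⟩

lemma stratPatch_self {i : N} {s : S} {a : A} (ha : a ∈ G.act s)
    (F : S → G.Strat i) (t0 : G.Strat i) : (G.stratPatch i s a ha F t0).1 s = a := by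
  unfold stratPatch
  simp only
  rw [if_pos trivial]

lemma stratPatch_child {i : N} {s : S} {a : A} (ha : a ∈ G.act s)
    (F : S → G.Strat i) (t0 : G.Strat i) {z x : S} (hz : G.step s z)
    (hx : ReflTransGen G.step z x) :
    (G.stratPatch i s a ha F t0).1 x = (F z).1 x := by
  have hxs : x ≠ s := subtree_ne_root hz hx
  have h2 : ∃ z', G.step s z' ∧ ReflTransGen G.step z' x := ⟨z, hz, hx⟩
  unfold stratPatch
  simp only
  rw [if_neg hxs, dif_pos h2]
  have hch : h2.choose = z := child_unique h2.choose_spec.1 h2.choose_spec.2 hz hx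
  rw [hch]

open Classical in
/-- Patch a profile: all players play `a` at `s`, in the subtree rooted at a
successor `z` of `s` everyone plays according to `F z`, elsewhere `σ0`. -/
noncomputable def profPatch (G : PGame N S A) (s : S) (a : A) (ha : a ∈ G.act s)
    (F : S → G.Profile) (σ0 : G.Profile) : G.Profile := fun j =>
  ⟨fun x => if x = s then a
     else if h : ∃ z, G.step s z ∧ ReflTransGen G.step z x then ((F h.choose) j).1 x
     else (σ0 j).1 x, by
    intro x hx
    dsimp only
    by_cases h1 : x = s
    · rw [if_pos h1, h1]
      exact ha
    · rw [if_neg h1]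
      by_cases h2 : ∃ z, G.step s z ∧ ReflTransGen G.step z x
      · rw [dif_pos h2]
        exact ((F h2.choose) j).2 x hx
      · rw [dif_neg h2]
        exact (σ0 j).2 x hx⟩

lemma profPatch_playFun_self {s : S} {a : A} (ha : a ∈ G.act s)
    (F : S → G.Profile) (σ0 : G.Profile) : G.playFun (G.profPatch s a ha F σ0) s = a := by
  unfold playFun profPatch
  simp only
  rw [if_pos trivial]

lemma profPatch_child {s : S} {a : A} (ha : a ∈ G.act s)
    (F : S → G.Profile) (σ0 : G.Profile) {z x : S} (hz : G.step s z)
    (hx : ReflTransGen G.step z x) (j : N) :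
    ((G.profPatch s a ha F σ0) j).1 x = ((F z) j).1 x := by
  have hxs : x ≠ s := subtree_ne_root hz hx
  have h2 : ∃ z', G.step s z' ∧ ReflTransGen G.step z' x := ⟨z, hz, hx⟩
  unfold profPatch
  simp only
  rw [if_neg hxs, dif_pos h2]
  have hch : h2.choose = z := child_unique h2.choose_spec.1 h2.choose_spec.2 hz hx
  rw [hch]

end Aux9

end PGame
namespace PGame

section Aux10

open Relation MeasureTheory

variable {N S A : Type*} [Countable S] {G : PGame N S A}
variable {μ : G.Profile → Measure G.Play} (hμ : G.IsInducedMeasure μ)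
variable {u : N → G.Play → ℝ} {E : G.Profile → S → N → ℝ} (hE : G.IsSubgamePayoff μ u E)
variable {i : N} (hm : Measurable (u i)) {C : ℝ} (hC : 0 ≤ C) (hb : ∀ p, |u i p| ≤ C)

include hμ hE hm hb

lemma bddE (τo : G.Profile) (s : S) :
    BddAbove (Set.range fun τi : G.Strat i => E (G.comb i τi τo) s i) :=
  bddAbove_of_abs (fun _ => E_abs_le hμ hE hm hb)

include hC in
lemma supE_abs (τo : G.Profile) (s : S) :
    |⨆ τi : G.Strat i, E (G.comb i τi τo) s i| ≤ C :=
  abs_ciSup_le (fun _ => E_abs_le hμ hE hm hb) hC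

include hC in
/-- Upper bound: one-step expansion of any strategy against `τo`. -/
lemma supEx_le_gen (τo : G.Profile) (τi : G.Strat i) (s : S) :
    E (G.comb i τi τo) s i ≤
      ∑' z : S, (G.q s (G.playFun (G.comb i τi τo) s) z).toReal *
        ⨆ τi' : G.Strat i, E (G.comb i τi' τo) z i := by
  rw [E_step hμ hE hm hb (σ := G.comb i τi τo) (s := s)]
  refine Summable.tsum_le_tsum (fun z => ?_)
    (summable_q_mul _ _ _ C (fun z => E_abs_le hμ hE hm hb))
    (summable_q_mul _ _ _ C (fun z => supE_abs hμ hE hm hC hb τo z))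
  exact mul_le_mul_of_nonneg_left (le_ciSup (bddE hμ hE hm hb τo z) τi)
    ENNReal.toReal_nonneg

omit hμ hE hm hb in
lemma comb_patch_playFun (τo : G.Profile) {s : S} {a : A} (ha : a ∈ G.act s)
    (F : S → G.Strat i) (t0 : G.Strat i) (h : G.ctrl s = i ∨ a = G.playFun τo s) :
    G.playFun (G.comb i (G.stratPatch i s a ha F t0) τo) s = a := by
  by_cases hc : G.ctrl s = i
  · rw [comb_playFun_eq hc, stratPatch_self]
  · rw [comb_playFun_ne hc]
    rcases h with h | h
    · exact absurd h hc
    · exact h.symm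

include hC in
/-- Lower bound: patched strategies realize the one-step supremum up to `ε`. -/
lemma supEx_ge (τo : G.Profile) {s : S} {a : A} (ha : a ∈ G.act s)
    (h : G.ctrl s = i ∨ a = G.playFun τo s) :
    (∑' z : S, (G.q s a z).toReal * ⨆ τi' : G.Strat i, E (G.comb i τi' τo) z i) ≤
      ⨆ τi : G.Strat i, E (G.comb i τi τo) s i := by
  refine le_of_forall_pos_le_add fun ε hε => ?_
  have hchoice : ∀ z : S, ∃ τz : G.Strat i,
      (⨆ τi' : G.Strat i, E (G.comb i τi' τo) z i) - ε < E (G.comb i τz τo) z i := by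
    intro z
    exact exists_lt_of_lt_ciSup (sub_lt_self _ hε)
  choose F hF using hchoice
  set τs := G.stratPatch i s a ha F (Classical.arbitrary _) with hτs
  have hplay : G.playFun (G.comb i τs τo) s = a := comb_patch_playFun τo ha F _ h
  have hstep := E_step hμ hE hm hb (σ := G.comb i τs τo) (s := s)
  rw [hplay] at hstep
  have hterm : ∀ z : S,
      (G.q s a z).toReal * ((⨆ τi' : G.Strat i, E (G.comb i τi' τo) z i) - ε) ≤
        (G.q s a z).toReal * E (G.comb i τs τo) z i := by
    intro z
    by_cases hzs : z ∈ (G.q s a).support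
    · have hstepz : G.step s z := ⟨a, ha, hzs⟩
      have heq : E (G.comb i τs τo) z i = E (G.comb i (F z) τo) z i := by
        refine E_eq hμ hE i fun x hx => ?_
        by_cases hcx : G.ctrl x = i
        · rw [comb_playFun_eq hcx, comb_playFun_eq hcx, hτs,
            stratPatch_child ha F _ hstepz hx]
        · rw [comb_playFun_ne hcx, comb_playFun_ne hcx]
      rw [heq]
      exact mul_le_mul_of_nonneg_left (le_of_lt (hF z)) ENNReal.toReal_nonneg
    · have h0 : G.q s a z = 0 := PMF.apply_eq_zero_iff _ _ |>.mpr hzs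
      rw [h0, ENNReal.toReal_zero, zero_mul, zero_mul]
  have hsum : (∑' z : S, (G.q s a z).toReal *
      ((⨆ τi' : G.Strat i, E (G.comb i τi' τo) z i) - ε)) ≤ E (G.comb i τs τo) s i := by
    rw [hstep]
    exact Summable.tsum_le_tsum hterm
      (summable_q_mul _ _ _ (C + ε) (fun z => by
        have h1 := supE_abs hμ hE hm hC hb τo z
        rw [abs_le] at h1 ⊢
        constructor <;> [linarith [h1.1]; linarith [h1.2]]))
      (summable_q_mul _ _ _ C (fun z => E_abs_le hμ hE hm hb))
  have hexp : (∑' z : S, (G.q s a z).toReal *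
      ((⨆ τi' : G.Strat i, E (G.comb i τi' τo) z i) - ε)) =
      (∑' z : S, (G.q s a z).toReal * ⨆ τi' : G.Strat i, E (G.comb i τi' τo) z i) - ε := by
    have h1 : ∀ z : S, (G.q s a z).toReal *
        ((⨆ τi' : G.Strat i, E (G.comb i τi' τo) z i) - ε) =
        (G.q s a z).toReal * (⨆ τi' : G.Strat i, E (G.comb i τi' τo) z i) -
          (G.q s a z).toReal * ε := fun z => mul_sub _ _ _
    rw [tsum_congr h1, Summable.tsum_sub
      (summable_q_mul _ _ _ C (fun z => supE_abs hμ hE hm hC hb τo z))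
      ((summable_q s a).mul_right ε), tsum_mul_right, tsum_q, one_mul]
  rw [hexp] at hsum
  have hfin : E (G.comb i τs τo) s i ≤ ⨆ τi : G.Strat i, E (G.comb i τi τo) s i :=
    le_ciSup (bddE hμ hE hm hb τo s) τs
  linarith

end Aux10

end PGame
namespace PGame

section Aux11

open Relation MeasureTheory

variable {N S A : Type*} [Countable S] {G : PGame N S A}

/-- The upper (inf-sup) value. -/
noncomputable def wv (G : PGame N S A) (E : G.Profile → S → N → ℝ) (i : N) (s : S) : ℝ :=
  ⨅ τo : G.Profile, ⨆ τi : G.Strat i, E (G.comb i τi τo) s i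

variable {μ : G.Profile → Measure G.Play} (hμ : G.IsInducedMeasure μ)
variable {u : N → G.Play → ℝ} {E : G.Profile → S → N → ℝ} (hE : G.IsSubgamePayoff μ u E)
variable {i : N} (hm : Measurable (u i)) {C : ℝ} (hC : 0 ≤ C) (hb : ∀ p, |u i p| ≤ C)

include hμ hE hm hb hC

lemma wv_abs (s : S) : |G.wv E i s| ≤ C :=
  abs_ciInf_le (fun τo => supE_abs hμ hE hm hC hb τo s) hC

lemma wv_bddBelow (s : S) :
    BddBelow (Set.range fun τo : G.Profile => ⨆ τi : G.Strat i, E (G.comb i τi τo) s i) :=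
  bddBelow_of_abs (fun τo => supE_abs hμ hE hm hC hb τo s)

lemma supTerm_own (τo : G.Profile) {s : S} (hctrl : G.ctrl s = i) :
    (⨆ τi : G.Strat i, E (G.comb i τi τo) s i) =
      (G.act s).sup' (G.act_nonempty s)
        (fun a => ∑' z : S, (G.q s a z).toReal *
          ⨆ τi' : G.Strat i, E (G.comb i τi' τo) z i) := by
  apply le_antisymm
  · refine ciSup_le fun τi => ?_
    refine le_trans (supEx_le_gen hμ hE hm hC hb τo τi s) ?_
    rw [comb_playFun_eq hctrl]
    exact Finset.le_sup' (fun a => ∑' z : S, (G.q s a z).toReal *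
      ⨆ τi' : G.Strat i, E (G.comb i τi' τo) z i) (τi.2 s hctrl)
  · exact Finset.sup'_le _ _ fun a ha => supEx_ge hμ hE hm hC hb τo ha (Or.inl hctrl)

lemma supTerm_opp (τo : G.Profile) {s : S} (hctrl : G.ctrl s ≠ i) :
    (⨆ τi : G.Strat i, E (G.comb i τi τo) s i) =
      ∑' z : S, (G.q s (G.playFun τo s) z).toReal *
        ⨆ τi' : G.Strat i, E (G.comb i τi' τo) z i := by
  apply le_antisymm
  · refine ciSup_le fun τi => ?_
    have h := supEx_le_gen hμ hE hm hC hb τo τi s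
    rwa [comb_playFun_ne hctrl] at h
  · exact supEx_ge hμ hE hm hC hb τo (playFun_mem τo s) (Or.inr rfl)

/-- Under the patched opponent profile, the subgame suprema at the successors
are realized by the chosen profiles. -/
lemma sup_patch_eq {s : S} {a : A} (ha : a ∈ G.act s) (Fo : S → G.Profile)
    (σ0 : G.Profile) {z : S} (hstepz : G.step s z) :
    (⨆ τi : G.Strat i, E (G.comb i τi (G.profPatch s a ha Fo σ0)) z i) =
      ⨆ τi : G.Strat i, E (G.comb i τi (Fo z)) z i := by
  have hfun : ∀ τi : G.Strat i,
      E (G.comb i τi (G.profPatch s a ha Fo σ0)) z i = E (G.comb i τi (Fo z)) z i := by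
    intro τi
    refine E_eq hμ hE i fun x hx => ?_
    by_cases hcx : G.ctrl x = i
    · rw [comb_playFun_eq hcx, comb_playFun_eq hcx]
    · rw [comb_playFun_ne hcx, comb_playFun_ne hcx]
      unfold playFun
      rw [profPatch_child ha Fo σ0 hstepz hx]
  exact iSup_congr hfun

/-- ε-optimal opponent patches: the value of the patched profile is bounded by
the expected `wv + ε`. -/
lemma wv_patch_le {s : S} {a : A} (ha : a ∈ G.act s) {ε : ℝ} (hε : 0 < ε) :
    ∃ τo : G.Profile, G.playFun τo s = a ∧ ∀ z, G.step s z →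
      (⨆ τi : G.Strat i, E (G.comb i τi τo) z i) ≤ G.wv E i z + ε := by
  have hchoice : ∀ z : S, ∃ τz : G.Profile,
      (⨆ τi : G.Strat i, E (G.comb i τi τz) z i) < G.wv E i z + ε := by
    intro z
    exact exists_lt_of_ciInf_lt (lt_add_of_pos_right _ hε)
  choose Fo hFo using hchoice
  refine ⟨G.profPatch s a ha Fo (Classical.arbitrary _),
    profPatch_playFun_self ha Fo _, fun z hz => ?_⟩
  rw [sup_patch_eq hμ hE hm hC hb ha Fo _ hz]
  exact le_of_lt (hFo z)

lemma tsum_q_add_eps (s : S) (a : A) (f : S → ℝ) (Cf : ℝ) (hf : ∀ z, |f z| ≤ Cf) (ε : ℝ) :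
    ∑' z : S, (G.q s a z).toReal * (f z + ε) =
      (∑' z : S, (G.q s a z).toReal * f z) + ε := by
  have h1 : ∀ z : S, (G.q s a z).toReal * (f z + ε) =
      (G.q s a z).toReal * f z + (G.q s a z).toReal * ε := fun z => mul_add _ _ _
  rw [tsum_congr h1, Summable.tsum_add (summable_q_mul _ _ _ Cf hf) ((summable_q s a).mul_right ε),
    tsum_mul_right, tsum_q, one_mul]

/-- Bellman equation for the upper value at states controlled by `i`. -/
lemma wv_own {s : S} (hctrl : G.ctrl s = i) :
    G.wv E i s = (G.act s).sup' (G.act_nonempty s)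
      (fun a => ∑' z : S, (G.q s a z).toReal * G.wv E i z) := by
  apply le_antisymm
  · refine le_of_forall_pos_le_add fun ε hε => ?_
    set a0 := (G.act_nonempty s).choose with ha0def
    have ha0 : a0 ∈ G.act s := (G.act_nonempty s).choose_spec
    obtain ⟨τo, hτoa, hτo⟩ := wv_patch_le hμ hE hm hC hb ha0 hε
    refine le_trans (ciInf_le (wv_bddBelow hμ hE hm hC hb s) τo) ?_
    rw [supTerm_own hμ hE hm hC hb τo hctrl]
    refine Finset.sup'_le _ _ fun a ha => ?_
    have hterm : ∀ z : S, (G.q s a z).toReal *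
        (⨆ τi' : G.Strat i, E (G.comb i τi' τo) z i) ≤
        (G.q s a z).toReal * (G.wv E i z + ε) := by
      intro z
      by_cases hzs : z ∈ (G.q s a).support
      · exact mul_le_mul_of_nonneg_left (hτo z ⟨a, ha, hzs⟩) ENNReal.toReal_nonneg
      · have h0 : G.q s a z = 0 := PMF.apply_eq_zero_iff _ _ |>.mpr hzs
        rw [h0, ENNReal.toReal_zero, zero_mul, zero_mul]
    have hsum := Summable.tsum_le_tsum hterm
      (summable_q_mul _ _ _ C (fun z => supE_abs hμ hE hm hC hb τo z))
      (summable_q_mul _ _ _ (C + ε) (fun z => by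
        have h1 := wv_abs hμ hE hm hC hb z
        rw [abs_le] at h1 ⊢
        constructor <;> [linarith [h1.1]; linarith [h1.2]]))
    rw [tsum_q_add_eps hμ hE hm hC hb s a _ C (fun z => wv_abs hμ hE hm hC hb z) ε] at hsum
    refine le_trans hsum (add_le_add_left ?_ ε)
    exact Finset.le_sup' (fun a => ∑' z : S, (G.q s a z).toReal * G.wv E i z) ha
  · refine le_ciInf fun τo => ?_
    rw [supTerm_own hμ hE hm hC hb τo hctrl]
    refine Finset.sup'_le _ _ fun a ha => ?_
    refine le_trans ?_ (Finset.le_sup'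
      (fun a => ∑' z : S, (G.q s a z).toReal *
        ⨆ τi' : G.Strat i, E (G.comb i τi' τo) z i) ha)
    refine Summable.tsum_le_tsum (fun z => ?_)
      (summable_q_mul _ _ _ C (fun z => wv_abs hμ hE hm hC hb z))
      (summable_q_mul _ _ _ C (fun z => supE_abs hμ hE hm hC hb τo z))
    exact mul_le_mul_of_nonneg_left (ciInf_le (wv_bddBelow hμ hE hm hC hb z) τo)
      ENNReal.toReal_nonneg

/-- Bellman equation for the upper value at states not controlled by `i`. -/
lemma wv_opp {s : S} (hctrl : G.ctrl s ≠ i) :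
    G.wv E i s = (G.act s).inf' (G.act_nonempty s)
      (fun a => ∑' z : S, (G.q s a z).toReal * G.wv E i z) := by
  apply le_antisymm
  · refine Finset.le_inf' _ _ fun a ha => ?_
    refine le_of_forall_pos_le_add fun ε hε => ?_
    obtain ⟨τo, hτoa, hτo⟩ := wv_patch_le hμ hE hm hC hb ha hε
    refine le_trans (ciInf_le (wv_bddBelow hμ hE hm hC hb s) τo) ?_
    rw [supTerm_opp hμ hE hm hC hb τo hctrl, hτoa]
    have hterm : ∀ z : S, (G.q s a z).toReal *
        (⨆ τi' : G.Strat i, E (G.comb i τi' τo) z i) ≤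
        (G.q s a z).toReal * (G.wv E i z + ε) := by
      intro z
      by_cases hzs : z ∈ (G.q s a).support
      · exact mul_le_mul_of_nonneg_left (hτo z ⟨a, ha, hzs⟩) ENNReal.toReal_nonneg
      · have h0 : G.q s a z = 0 := PMF.apply_eq_zero_iff _ _ |>.mpr hzs
        rw [h0, ENNReal.toReal_zero, zero_mul, zero_mul]
    have hsum := Summable.tsum_le_tsum hterm
      (summable_q_mul _ _ _ C (fun z => supE_abs hμ hE hm hC hb τo z))
      (summable_q_mul _ _ _ (C + ε) (fun z => by
        have h1 := wv_abs hμ hE hm hC hb z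
        rw [abs_le] at h1 ⊢
        constructor <;> [linarith [h1.1]; linarith [h1.2]]))
    rwa [tsum_q_add_eps hμ hE hm hC hb s a _ C (fun z => wv_abs hμ hE hm hC hb z) ε] at hsum
  · refine le_ciInf fun τo => ?_
    rw [supTerm_opp hμ hE hm hC hb τo hctrl]
    refine le_trans (Finset.inf'_le _ (playFun_mem τo s)) ?_
    refine Summable.tsum_le_tsum (fun z => ?_)
      (summable_q_mul _ _ _ C (fun z => wv_abs hμ hE hm hC hb z))
      (summable_q_mul _ _ _ C (fun z => supE_abs hμ hE hm hC hb τo z))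
    exact mul_le_mul_of_nonneg_left (ciInf_le (wv_bddBelow hμ hE hm hC hb z) τo)
      ENNReal.toReal_nonneg

end Aux11

end PGame
namespace PGame

section Aux12

open Relation MeasureTheory Filter

variable {N S A : Type*} [Countable S] {G : PGame N S A}
variable {μ : G.Profile → Measure G.Play} (hμ : G.IsInducedMeasure μ)
variable {u : N → G.Play → ℝ} {E : G.Profile → S → N → ℝ} (hE : G.IsSubgamePayoff μ u E)
variable {i : N} (hm : Measurable (u i)) {C : ℝ} (hC : 0 ≤ C) (hb : ∀ p, |u i p| ≤ C)

open Classical in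
/-- The greedy strategy with respect to the upper value. -/
noncomputable def greedy (G : PGame N S A) (E : G.Profile → S → N → ℝ) (i : N) :
    G.Strat i :=
  ⟨fun x => if G.ctrl x = i then
      (Finset.exists_mem_eq_sup' (G.act_nonempty x)
        (fun a => ∑' z : S, (G.q x a z).toReal * G.wv E i z)).choose
    else (G.act_nonempty x).choose, by
    intro x hx
    dsimp only
    rw [if_pos hx]
    exact (Finset.exists_mem_eq_sup' (G.act_nonempty x) _).choose_spec.1⟩

open Classical in
lemma greedy_spec {x : S} (hx : G.ctrl x = i) :
    (G.act x).sup' (G.act_nonempty x) (fun a => ∑' z : S, (G.q x a z).toReal * G.wv E i z)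
      = ∑' z : S, (G.q x ((G.greedy E i).1 x) z).toReal * G.wv E i z := by
  have h := (Finset.exists_mem_eq_sup' (G.act_nonempty x)
    (fun a => ∑' z : S, (G.q x a z).toReal * G.wv E i z)).choose_spec.2
  have he : (G.greedy E i).1 x = (Finset.exists_mem_eq_sup' (G.act_nonempty x)
      (fun a => ∑' z : S, (G.q x a z).toReal * G.wv E i z)).choose := by
    unfold greedy
    simp only
    rw [if_pos hx]
  rw [he]
  exact h

include hμ hE hm hC hb in
/-- The submartingale property of the upper value under the greedy strategy. -/
lemma wv_step (τo : G.Profile) (x : S) :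
    G.wv E i x ≤ ∑' z : S,
      (G.q x (G.playFun (G.comb i (G.greedy E i) τo) x) z).toReal * G.wv E i z := by
  by_cases hx : G.ctrl x = i
  · rw [comb_playFun_eq hx]
    rw [wv_own hμ hE hm hC hb hx, greedy_spec hx]
  · rw [comb_playFun_ne hx]
    rw [wv_opp hμ hE hm hC hb hx]
    exact Finset.inf'_le _ (playFun_mem τo x)

/-- The supremum of the payoff over the plays through `s`. -/
noncomputable def Mx (G : PGame N S A) (u : N → G.Play → ℝ) (i : N) (s : S) : ℝ :=
  haveI : Nonempty ↥(G.through s) := (through_nonempty s).to_subtype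
  ⨆ p : ↥(G.through s), u i p.1

/-- The infimum of the payoff over the plays through `s`. -/
noncomputable def mx (G : PGame N S A) (u : N → G.Play → ℝ) (i : N) (s : S) : ℝ :=
  haveI : Nonempty ↥(G.through s) := (through_nonempty s).to_subtype
  ⨅ p : ↥(G.through s), u i p.1

/-- The oscillation of the payoff over the plays through `s`. -/
noncomputable def osc (G : PGame N S A) (u : N → G.Play → ℝ) (i : N) (s : S) : ℝ :=
  G.Mx u i s - G.mx u i s

omit [Countable S] in
include hb in
lemma Mx_abs (s : S) : |G.Mx u i s| ≤ C := by
  haveI : Nonempty ↥(G.through s) := (through_nonempty s).to_subtype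
  exact abs_ciSup_le (fun p => hb p.1) (le_trans (abs_nonneg _) (hb G.exists_play.some))

omit [Countable S] in
include hb in
lemma mx_abs (s : S) : |G.mx u i s| ≤ C := by
  haveI : Nonempty ↥(G.through s) := (through_nonempty s).to_subtype
  exact abs_ciInf_le (fun p => hb p.1) (le_trans (abs_nonneg _) (hb G.exists_play.some))

omit [Countable S] in
include hb in
lemma osc_abs (s : S) : |G.osc u i s| ≤ 2 * C := by
  have h1 := Mx_abs (G := G) (i := i) hb s
  have h2 := mx_abs (G := G) (i := i) hb s
  rw [abs_le] at h1 h2 ⊢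
  unfold osc
  constructor <;> [linarith [h1.1, h2.2]; linarith [h1.2, h2.1]]

omit [Countable S] in
include hb in
lemma le_Mx {s : S} {p : G.Play} (hp : p ∈ G.through s) : u i p ≤ G.Mx u i s := by
  haveI : Nonempty ↥(G.through s) := (through_nonempty s).to_subtype
  exact le_ciSup (bddAbove_of_abs (fun q : ↥(G.through s) => hb q.1)) ⟨p, hp⟩

omit [Countable S] in
include hb in
lemma mx_le {s : S} {p : G.Play} (hp : p ∈ G.through s) : G.mx u i s ≤ u i p := by
  haveI : Nonempty ↥(G.through s) := (through_nonempty s).to_subtype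
  exact ciInf_le (bddBelow_of_abs (fun q : ↥(G.through s) => hb q.1)) ⟨p, hp⟩

omit [Countable S] in
include hb in
lemma osc_nonneg (s : S) : 0 ≤ G.osc u i s := by
  obtain ⟨p, hp⟩ := through_nonempty (G := G) s
  have := le_Mx (i := i) hb hp
  have := mx_le (i := i) hb hp
  unfold osc
  linarith

include hμ hE hm hb in
lemma E_between (σ : G.Profile) (s : S) :
    G.mx u i s ≤ E σ s i ∧ E σ s i ≤ G.Mx u i s :=
  ⟨E_ge hμ hE hm hb (fun p hp => mx_le hb hp),
   E_le hμ hE hm hb (fun p hp => le_Mx hb hp)⟩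

include hμ hE hm hC hb in
lemma wv_between (s : S) : G.mx u i s ≤ G.wv E i s ∧ G.wv E i s ≤ G.Mx u i s := by
  constructor
  · refine le_ciInf fun τo => ?_
    exact le_trans (E_between hμ hE hm hb (G.comb i (Classical.arbitrary _) τo) s).1
      (le_ciSup (bddE hμ hE hm hb τo s) _)
  · refine le_trans (ciInf_le (wv_bddBelow hμ hE hm hC hb s) (Classical.arbitrary _)) ?_
    exact ciSup_le fun τi => (E_between hμ hE hm hb _ s).2

include hμ hE hm hC hb in
lemma wv_sub_E_le (σ : G.Profile) (s : S) : G.wv E i s - E σ s i ≤ G.osc u i s := by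
  have h1 := (wv_between hμ hE hm hC hb s).2
  have h2 := (E_between hμ hE hm hb σ s).1
  unfold osc
  linarith

omit [Countable S] in
lemma cylSet_anti (p : G.Play) {m n : ℕ} (h : m ≤ n) : G.cylSet p n ⊆ G.cylSet p m :=
  fun q hq k hk => hq k (lt_of_lt_of_le hk h)

omit [Countable S] in
/-- Cylinder sets form a neighbourhood basis. -/
lemma exists_cyl_subset {p : G.Play} {V : Set G.Play} (hV : V ∈ nhds p) :
    ∃ M, G.cylSet p M ⊆ V := by
  letI : TopologicalSpace S := ⊥
  letI : TopologicalSpace A := ⊥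
  haveI : DiscreteTopology S := ⟨rfl⟩
  haveI : DiscreteTopology A := ⟨rfl⟩
  rw [show (nhds p : Filter G.Play) = Filter.comap Subtype.val (nhds p.1) from
    nhds_induced _ _] at hV
  obtain ⟨W, hW, hsub⟩ := Filter.mem_comap.mp hV
  rw [nhds_pi, Filter.mem_pi] at hW
  obtain ⟨I, hIfin, t, ht, hIt⟩ := hW
  obtain ⟨M, hM⟩ := hIfin.bddAbove
  refine ⟨M + 1, fun q hq => hsub ?_⟩
  refine hIt fun k hk => ?_
  have hkM : k < M + 1 := Nat.lt_succ_of_le (hM hk)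
  rw [hq k hkM]
  exact mem_of_mem_nhds (ht k)

omit [Countable S] in
lemma through_subset_cylSet {p : G.Play} {k : ℕ} :
    G.through ((p.1 k).1) ⊆ G.cylSet p k := by
  intro p' hp'
  have hdep : G.dep ((p.1 k).1) = k := (dep_eq rfl).symm
  rw [through_eq, hdep] at hp'
  exact play_agree k hp'

omit [Countable S] in
include hb in
/-- The oscillation along a play tends to zero (continuity of the payoff). -/
lemma osc_tendsto (hcont : Continuous (u i)) (p : G.Play) :
    Tendsto (fun k => G.osc u i ((p.1 k).1)) atTop (nhds 0) := by
  rw [Metric.tendsto_atTop]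
  intro ε hε
  have hε3 : 0 < ε / 3 := by linarith
  have hV : (u i) ⁻¹' Metric.ball (u i p) (ε / 3) ∈ nhds p :=
    hcont.continuousAt.preimage_mem_nhds (Metric.ball_mem_nhds _ hε3)
  obtain ⟨M, hM⟩ := exists_cyl_subset hV
  refine ⟨M, fun k hk => ?_⟩
  have hsub : G.through ((p.1 k).1) ⊆ (u i) ⁻¹' Metric.ball (u i p) (ε / 3) :=
    subset_trans through_subset_cylSet (subset_trans (cylSet_anti p hk) hM)
  have hub : ∀ p' ∈ G.through ((p.1 k).1), u i p' ≤ u i p + ε / 3 := by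
    intro p' hp'
    have := hsub hp'
    rw [Set.mem_preimage, Metric.mem_ball, Real.dist_eq, abs_lt] at this
    linarith [this.2]
  have hlb : ∀ p' ∈ G.through ((p.1 k).1), u i p - ε / 3 ≤ u i p' := by
    intro p' hp'
    have := hsub hp'
    rw [Set.mem_preimage, Metric.mem_ball, Real.dist_eq, abs_lt] at this
    linarith [this.1]
  haveI : Nonempty ↥(G.through ((p.1 k).1)) := (through_nonempty _).to_subtype
  have hMx : G.Mx u i ((p.1 k).1) ≤ u i p + ε / 3 :=
    ciSup_le fun q => hub q.1 q.2
  have hmx : u i p - ε / 3 ≤ G.mx u i ((p.1 k).1) :=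
    le_ciInf fun q => hlb q.1 q.2
  have hosc : G.osc u i ((p.1 k).1) ≤ 2 * (ε / 3) := by
    unfold osc
    linarith
  have hosc0 := osc_nonneg (i := i) hb ((p.1 k).1)
  rw [Real.dist_eq, sub_zero, abs_of_nonneg hosc0]
  linarith

end Aux12

end PGame
namespace PGame

section Aux13

open Relation MeasureTheory Filter

variable {N S A : Type*} [Countable S] {G : PGame N S A}
variable {μ : G.Profile → Measure G.Play} (hμ : G.IsInducedMeasure μ)
variable {u : N → G.Play → ℝ} {E : G.Profile → S → N → ℝ} (hE : G.IsSubgamePayoff μ u E)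
variable {i : N} (hm : Measurable (u i)) {C : ℝ} (hC : 0 ≤ C) (hb : ∀ p, |u i p| ≤ C)

include hμ

lemma measure_through_child (τ : G.Profile) (s : S)
    (z : ↥(G.q s (G.playFun τ s)).support) :
    (μ τ (G.through z.1)).toReal =
      (μ τ (G.through s)).toReal * (G.q s (G.playFun τ s) z.1).toReal := by
  rw [through_measure_step hμ (playFun_mem τ s) z.2 τ, if_pos rfl, mul_one,
    ENNReal.toReal_mul]

lemma summable_mul_measure (τ : G.Profile) (s : S) (f : S → ℝ) {D : ℝ}
    (hf : ∀ z, |f z| ≤ D) :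
    Summable (fun z : ↥(G.q s (G.playFun τ s)).support =>
      f z.1 * (μ τ (G.through z.1)).toReal) := by
  set c := (μ τ (G.through s)).toReal with hc
  have hs0 : Summable (fun z : S => (D * c) * (G.q s (G.playFun τ s) z).toReal) :=
    (summable_q s _).mul_left _
  have hs1 : Summable (fun z : ↥(G.q s (G.playFun τ s)).support =>
      (D * c) * (G.q s (G.playFun τ s) z.1).toReal) := hs0.subtype _
  refine Summable.of_abs (Summable.of_nonneg_of_le (fun _ => abs_nonneg _)
    (fun z => ?_) hs1)
  rw [measure_through_child hμ τ s z, abs_mul]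
  have h1 : |f z.1| * |c * (G.q s (G.playFun τ s) z.1).toReal| ≤
      D * (c * (G.q s (G.playFun τ s) z.1).toReal) := by
    rw [abs_of_nonneg (mul_nonneg ENNReal.toReal_nonneg ENNReal.toReal_nonneg)]
    exact mul_le_mul_of_nonneg_right (hf z.1)
      (mul_nonneg ENNReal.toReal_nonneg ENNReal.toReal_nonneg)
  calc |f z.1| * |c * (G.q s (G.playFun τ s) z.1).toReal| ≤
      D * (c * (G.q s (G.playFun τ s) z.1).toReal) := h1
    _ = D * c * (G.q s (G.playFun τ s) z.1).toReal := by ring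

lemma summable_int_subtype {g : G.Play → ℝ} (hgm : Measurable g) {D : ℝ} (hD : 0 ≤ D)
    (hgb : ∀ p, |g p| ≤ D) (τ : G.Profile) (s : S) :
    Summable (fun z : ↥(G.q s (G.playFun τ s)).support =>
      ∫ p in G.through z.1, g p ∂(μ τ)) := by
  refine Summable.of_abs (Summable.of_nonneg_of_le (fun _ => abs_nonneg _)
    (fun z => ?_) (summable_mul_measure hμ τ s (fun _ => D) (fun z => by
      rw [abs_of_nonneg hD])))
  haveI := hμ.1 τ
  have h1 : ‖∫ p in G.through z.1, g p ∂(μ τ)‖ ≤ D * (μ τ (G.through z.1)).toReal := by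
    refine norm_setIntegral_le_of_norm_le_const (measure_lt_top _ _) (fun p _ => ?_)
    rw [Real.norm_eq_abs]
    exact hgb p
  rw [Real.norm_eq_abs] at h1
  exact h1

include hE hm hC hb

/-- The submartingale inequality, iterated `n` steps. -/
lemma mart_ineq (σ : G.Profile) (sb : S)
    (hsub : ∀ x, ReflTransGen G.step sb x →
      G.wv E i x ≤ ∑' z : S, (G.q x (G.playFun σ x) z).toReal * G.wv E i z) :
    ∀ (n : ℕ) (s : S), ReflTransGen G.step sb s →
      G.wv E i s * (μ (G.pathPatch σ sb) (G.through s)).toReal ≤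
        (∫ p in G.through s, u i p ∂(μ (G.pathPatch σ sb))) +
        ∫ p in G.through s, G.osc u i ((p.1 (G.dep s + n)).1) ∂(μ (G.pathPatch σ sb)) := by
  set τ := G.pathPatch σ sb with hτdef
  intro n
  induction n with
  | zero =>
      intro s hs
      set c := (μ τ (G.through s)).toReal with hc
      have hc0 : 0 ≤ c := ENNReal.toReal_nonneg
      have hosc : ∫ p in G.through s, G.osc u i ((p.1 (G.dep s + 0)).1) ∂(μ τ) =
          c * G.osc u i s := by
        have hcong : Set.EqOn (fun p : G.Play => G.osc u i ((p.1 (G.dep s + 0)).1))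
            (fun _ => G.osc u i s) (G.through s) := by
          intro p hp
          rw [through_eq] at hp
          simp only [Set.mem_setOf_eq] at hp
          simp only [Nat.add_zero, hp]
        rw [setIntegral_congr_fun (measurableSet_through s) hcong, setIntegral_const,
          smul_eq_mul, measureReal_def]
      have hu : G.mx u i s * c ≤ ∫ p in G.through s, u i p ∂(μ τ) := by
        have h2 : ∫ p in G.through s, G.mx u i s ∂(μ τ) ≤
            ∫ p in G.through s, u i p ∂(μ τ) := by
          refine setIntegral_mono_on (integrableOn_const ?_)
            ((integrable_of_bdd hμ hm hb τ).integrableOn) (measurableSet_through s)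
            (fun p hp => mx_le hb hp)
          haveI := hμ.1 τ
          exact measure_ne_top _ _
        rwa [setIntegral_const, smul_eq_mul, measureReal_def, mul_comm] at h2
      have hwv : G.wv E i s ≤ G.mx u i s + G.osc u i s := by
        have := (wv_between hμ hE hm hC hb s).2
        unfold osc at *
        linarith
      rw [hosc]
      calc G.wv E i s * c ≤ (G.mx u i s + G.osc u i s) * c :=
            mul_le_mul_of_nonneg_right hwv hc0
        _ = G.mx u i s * c + c * G.osc u i s := by ring
        _ ≤ _ := by linarith
  | succ n ih =>
      intro s hs
      set c := (μ τ (G.through s)).toReal with hc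
      have hc0 : 0 ≤ c := ENNReal.toReal_nonneg
      set aτ := G.playFun τ s with haτ
      have haσ : aτ = G.playFun σ s := pathPatch_playFun σ sb hs
      set k := G.dep s + (n + 1) with hk
      have hgm : Measurable (fun p : G.Play => G.osc u i ((p.1 k).1)) :=
        measurable_comp_fst k _
      have hgb : ∀ p : G.Play, |G.osc u i ((p.1 k).1)| ≤ 2 * C :=
        fun p => osc_abs hb _
      -- decompositions
      have hdecu := integral_through_decomp hμ hm hb τ s
      have hdecg := integral_through_decomp hμ hgm hgb τ s
      -- termwise induction hypothesis
      have hterm : ∀ z : ↥(G.q s aτ).support,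
          G.wv E i z.1 * (μ τ (G.through z.1)).toReal ≤
            (∫ p in G.through z.1, u i p ∂(μ τ)) +
            ∫ p in G.through z.1, G.osc u i ((p.1 k).1) ∂(μ τ) := by
        intro z
        have hstepz : G.step s z.1 := ⟨aτ, playFun_mem τ s, z.2⟩
        have hsz : ReflTransGen G.step sb z.1 := hs.tail hstepz
        have hdz : G.dep z.1 = G.dep s + 1 := dep_step hstepz
        have := ih z.1 hsz
        rwa [hdz, (by omega : G.dep s + 1 + n = k)] at this
      -- summabilities
      have hsum1 : Summable (fun z : ↥(G.q s aτ).support =>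
          G.wv E i z.1 * (μ τ (G.through z.1)).toReal) :=
        summable_mul_measure hμ τ s _ (fun z => wv_abs hμ hE hm hC hb z)
      have hsum2 : Summable (fun z : ↥(G.q s aτ).support =>
          ∫ p in G.through z.1, u i p ∂(μ τ)) :=
        summable_int_subtype hμ hm hC hb τ s
      have hsum3 : Summable (fun z : ↥(G.q s aτ).support =>
          ∫ p in G.through z.1, G.osc u i ((p.1 k).1) ∂(μ τ)) :=
        summable_int_subtype hμ hgm (by linarith) hgb τ s
      -- the submartingale inequality at s
      have hstep1 : G.wv E i s * c ≤ ∑' z : ↥(G.q s aτ).support,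
          G.wv E i z.1 * (μ τ (G.through z.1)).toReal := by
        have h1 := hsub s hs
        rw [← haσ] at h1
        have h2 : (∑' z : S, (G.q s aτ z).toReal * G.wv E i z) * c =
            ∑' z : S, ((G.q s aτ z).toReal * G.wv E i z) * c := by
          rw [tsum_mul_right]
        have h3 : ∑' z : S, ((G.q s aτ z).toReal * G.wv E i z) * c =
            ∑' z : ↥(G.q s aτ).support, ((G.q s aτ z.1).toReal * G.wv E i z.1) * c := by
          refine (tsum_subtype_eq_of_support_subset ?_).symm
          intro z hz
          simp only [Function.mem_support, ne_eq] at hz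
          refine PMF.mem_support_iff _ _ |>.mpr fun h0 => hz ?_
          rw [h0, ENNReal.toReal_zero, zero_mul, zero_mul]
        have h4 : ∀ z : ↥(G.q s aτ).support,
            ((G.q s aτ z.1).toReal * G.wv E i z.1) * c =
              G.wv E i z.1 * (μ τ (G.through z.1)).toReal := by
          intro z
          rw [measure_through_child hμ τ s z]
          ring
        calc G.wv E i s * c ≤ (∑' z : S, (G.q s aτ z).toReal * G.wv E i z) * c :=
              mul_le_mul_of_nonneg_right h1 hc0
          _ = ∑' z : ↥(G.q s aτ).support, G.wv E i z.1 * (μ τ (G.through z.1)).toReal := by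
              rw [h2, h3, tsum_congr h4]
      have hstep2 : (∑' z : ↥(G.q s aτ).support,
          G.wv E i z.1 * (μ τ (G.through z.1)).toReal) ≤
          ∑' z : ↥(G.q s aτ).support,
            ((∫ p in G.through z.1, u i p ∂(μ τ)) +
             ∫ p in G.through z.1, G.osc u i ((p.1 k).1) ∂(μ τ)) :=
        Summable.tsum_le_tsum hterm hsum1 (hsum2.add hsum3)
      rw [Summable.tsum_add hsum2 hsum3] at hstep2
      rw [← hdecu, ← hdecg] at hstep2
      exact le_trans hstep1 hstep2

/-- The oscillation integrals converge to zero. -/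
lemma int_osc_tendsto (hcont : Continuous (u i)) (τ : G.Profile) (sb : S) :
    Tendsto (fun n => ∫ p in G.through sb,
      G.osc u i ((p.1 (G.dep sb + n)).1) ∂(μ τ)) atTop (nhds 0) := by
  haveI := hμ.1 τ
  have hzero : (0 : ℝ) = ∫ p in G.through sb, (0 : ℝ) ∂(μ τ) := by
    rw [integral_zero]
  rw [hzero]
  refine tendsto_integral_of_dominated_convergence (fun _ => 2 * C)
    (fun n => (measurable_comp_fst _ _).aestronglyMeasurable) (integrable_const _)
    (fun n => Eventually.of_forall fun p => ?_) (Eventually.of_forall fun p => ?_)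
  · rw [Real.norm_eq_abs]
    exact osc_abs hb _
  · have h1 : Tendsto (fun m : ℕ => G.dep sb + m) atTop atTop := by
      simpa [Nat.add_comm] using Filter.tendsto_add_atTop_nat (G.dep sb)
    exact (osc_tendsto hb hcont p).comp h1

/-- The inf-sup value is dominated by the sup-inf value. -/
lemma wv_le_val (hcont : Continuous (u i)) (sb : S) :
    G.wv E i sb ≤ ⨆ τi : G.Strat i, ⨅ τo : G.Profile, E (G.comb i τi τo) sb i := by
  have hbdd : BddAbove (Set.range fun τi : G.Strat i =>
      ⨅ τo : G.Profile, E (G.comb i τi τo) sb i) :=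
    bddAbove_of_abs (fun τi => abs_ciInf_le (fun τo => E_abs_le hμ hE hm hb) hC)
  refine le_trans ?_ (le_ciSup hbdd (G.greedy E i))
  refine le_ciInf fun τo => ?_
  set σ := G.comb i (G.greedy E i) τo with hσ
  set τ := G.pathPatch σ sb with hτ
  have hc : 0 < (μ τ (G.through sb)).toReal := pathPatch_toReal_pos hμ σ sb
  have hsub : ∀ x, ReflTransGen G.step sb x →
      G.wv E i x ≤ ∑' z : S, (G.q x (G.playFun σ x) z).toReal * G.wv E i z :=
    fun x _ => wv_step hμ hE hm hC hb τo x
  have hmart := mart_ineq hμ hE hm hC hb σ sb hsub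
  have hEeq : ∫ p in G.through sb, u i p ∂(μ τ) =
      E σ sb i * (μ τ (G.through sb)).toReal :=
    hE σ τ sb i (fun z hz => pathPatch_playFun σ sb hz)
  have hlim := int_osc_tendsto hμ hE hm hC hb hcont τ sb
  have hfin : G.wv E i sb * (μ τ (G.through sb)).toReal -
      E σ sb i * (μ τ (G.through sb)).toReal ≤ 0 := by
    refine ge_of_tendsto hlim (Eventually.of_forall fun n => ?_)
    have := hmart n sb ReflTransGen.refl
    rw [hEeq] at this
    linarith
  exact le_of_mul_le_mul_right (by linarith) hc

end Aux13

end PGame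
/-- **The value equations** (equations (1) and (2)): in a multi-player
perfect-information game with probabilistic transitions, countable state space,
nonempty finite action sets, and bounded continuous payoff functions, the values
`v_i(s)` of the zero-sum subgames `G_i(s)` exist (i.e. `sup inf = inf sup`), the
controlling player's value satisfies `v_{i(s)}(s) = max_{a ∈ A(s)} v_{i(s)}(s,a)`,
and every other player's value satisfies `v_j(s) = min_{a ∈ A(s)} v_j(s,a)`. -/
theorem subgame_value_equations
    {N S A : Type*} [Finite N] [Countable S]
    (hN : 2 ≤ Nat.card N)
    (G : PGame N S A) (u : N → G.Play → ℝ)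
    (hu_bdd : ∀ i : N, ∃ C : ℝ, ∀ p : G.Play, |u i p| ≤ C)
    (hu_cont : ∀ i : N, Continuous (u i))
    (μ : G.Profile → MeasureTheory.Measure G.Play)
    (hμ : G.IsInducedMeasure μ)
    (E : G.Profile → S → N → ℝ)
    (hE : G.IsSubgamePayoff μ u E) :
    (∀ (i : N) (s : S),
        (⨆ τi : G.Strat i, ⨅ τo : G.Profile, E (G.comb i τi τo) s i) =
          (⨅ τo : G.Profile, ⨆ τi : G.Strat i, E (G.comb i τi τo) s i)) ∧
    (∀ s : S,
        G.val E s (G.ctrl s) =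
          (G.act s).sup' (G.act_nonempty s) (fun a => G.valQ E s a (G.ctrl s))) ∧
    (∀ (s : S) (j : N), j ≠ G.ctrl s →
        G.val E s j = (G.act s).inf' (G.act_nonempty s) (fun a => G.valQ E s a j)) := by
  classical
  have hmeas : ∀ i : N, Measurable (u i) := fun i => (hu_cont i).measurable
  have hCex : ∀ i : N, ∃ C : ℝ, 0 ≤ C ∧ ∀ p, |u i p| ≤ C := by
    intro i
    obtain ⟨C, hC⟩ := hu_bdd i
    exact ⟨max C 0, le_max_right _ _, fun p => (hC p).trans (le_max_left _ _)⟩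
  choose C hC0 hCb using hCex
  have hval : ∀ (i : N) (s : S),
      (⨆ τi : G.Strat i, ⨅ τo : G.Profile, E (G.comb i τi τo) s i) = G.wv E i s := by
    intro i s
    apply le_antisymm
    · refine ciSup_le fun τi => le_ciInf fun τo => ?_
      refine le_trans (ciInf_le
        (PGame.bddBelow_of_abs (fun τo' => PGame.E_abs_le hμ hE (hmeas i) (hCb i))) τo) ?_
      exact le_ciSup (PGame.bddE hμ hE (hmeas i) (hCb i) τo s) τi
    · exact PGame.wv_le_val hμ hE (hmeas i) (hC0 i) (hCb i) (hu_cont i) s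
  have hvalQ : ∀ (i : N) (s : S) (a : A),
      G.valQ E s a i = ∑' z : S, (G.q s a z).toReal * G.wv E i z := by
    intro i s a
    unfold PGame.valQ
    exact tsum_congr fun z => by rw [show G.val E z i = G.wv E i z from hval i z]
  refine ⟨fun i s => hval i s, fun s => ?_, fun s j hj => ?_⟩
  · have h1 : G.val E s (G.ctrl s) = G.wv E (G.ctrl s) s := hval (G.ctrl s) s
    have h2 := PGame.wv_own hμ hE (hmeas (G.ctrl s)) (hC0 _) (hCb _)
      (rfl : G.ctrl s = G.ctrl s)
    rw [h1, h2]
    simp only [hvalQ]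
  · have h1 : G.val E s j = G.wv E j s := hval j s
    have h2 := PGame.wv_opp hμ hE (hmeas j) (hC0 j) (hCb j) (Ne.symm hj)
    rw [h1, h2]
    simp only [hvalQ]
end

section
/- Let N be a finite set with |N| ≥ 2 and let M ⊂ ℝ be a finite set with at least two elements. Put R = max_{m∈M} |m|, d = min{|m − m'| : m, m' ∈ M, m ≠ m'}, and δ = d/(2·|N|·R). Then for all functions x, y : N → M and every i ∈ N with x_i < y_i, one has x_i − δ·∑_{j∈N, j≠i} x_j < y_i − δ·∑_{j∈N, j≠i} y_j. -/
/-- **The δ-transformation preserves strict payoff comparisons**: let `N` be a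
finite set with `|N| ≥ 2` and `M ⊆ ℝ` a finite set with at least two elements.
Put `R = max_{m∈M} |m|`, `d = min{|m − m'| : m,m' ∈ M, m ≠ m'}` and
`δ = d/(2·|N|·R)`.  Then for all functions `x, y : N → M` and every `i ∈ N` with
`x_i < y_i`, one has
`x_i − δ·∑_{j≠i} x_j < y_i − δ·∑_{j≠i} y_j`. -/
theorem delta_transform_strict_mono
    {N : Type*} [Fintype N] [DecidableEq N]
    (hN : 2 ≤ Fintype.card N)
    (M : Finset ℝ) (hM : 2 ≤ M.card)
    (R d δ : ℝ)
    (hR : R = sSup {x : ℝ | ∃ m ∈ M, x = |m|})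
    (hd : d = sInf {x : ℝ | ∃ m ∈ M, ∃ m' ∈ M, m ≠ m' ∧ x = |m - m'|})
    (hδ : δ = d / (2 * (Fintype.card N : ℝ) * R))
    (x y : N → ℝ) (hx : ∀ j, x j ∈ M) (hy : ∀ j, y j ∈ M)
    (i : N) (hxy : x i < y i) :
    x i - δ * ∑ j ∈ Finset.univ.erase i, x j <
      y i - δ * ∑ j ∈ Finset.univ.erase i, y j := by
  obtain ⟨m₁, hm₁, m₂, hm₂, hmne⟩ := Finset.one_lt_card.mp hM
  set S1 : Set ℝ := {x : ℝ | ∃ m ∈ M, x = |m|} with hS1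
  set S2 : Set ℝ := {x : ℝ | ∃ m ∈ M, ∃ m' ∈ M, m ≠ m' ∧ x = |m - m'|} with hS2
  have hS1fin : S1.Finite := by
    apply (M.finite_toSet.image (fun m => |m|)).subset
    rintro _ ⟨m, hm, rfl⟩; exact ⟨m, hm, rfl⟩
  have hS2fin : S2.Finite := by
    apply ((M.finite_toSet.prod M.finite_toSet).image (fun p => |p.1 - p.2|)).subset
    rintro _ ⟨m, hm, m', hm', _, rfl⟩; exact ⟨(m, m'), ⟨hm, hm'⟩, rfl⟩
  have habs : ∀ m ∈ M, |m| ≤ R := fun m hm =>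
    hR ▸ le_csSup hS1fin.bddAbove ⟨m, hm, rfl⟩
  have hRpos : 0 < R := by
    have h : m₁ ≠ 0 ∨ m₂ ≠ 0 := by
      by_contra h; push_neg at h; exact hmne (h.1.trans h.2.symm)
    rcases h with h | h
    · exact lt_of_lt_of_le (abs_pos.mpr h) (habs _ hm₁)
    · exact lt_of_lt_of_le (abs_pos.mpr h) (habs _ hm₂)
  have hdmem : d ∈ S2 := hd ▸ Set.Nonempty.csInf_mem ⟨|m₁ - m₂|, m₁, hm₁, m₂, hm₂, hmne, rfl⟩ hS2fin
  have hdpos : 0 < d := by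
    obtain ⟨m, _, m', _, hne, hdd⟩ := hdmem
    rw [hdd]; exact abs_pos.mpr (sub_ne_zero.mpr hne)
  have hbdd : BddBelow S2 := ⟨0, by rintro _ ⟨m, _, m', _, _, rfl⟩; exact abs_nonneg _⟩
  have hdle : d ≤ y i - x i := by
    have h1 : d ≤ |x i - y i| :=
      hd ▸ csInf_le hbdd ⟨x i, hx i, y i, hy i, ne_of_lt hxy, rfl⟩
    rwa [abs_sub_comm, abs_of_pos (by linarith)] at h1
  set n : ℕ := Fintype.card N with hn
  have hn2 : (2 : ℝ) ≤ (n : ℝ) := by exact_mod_cast hN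
  have hδpos : 0 < δ := by
    rw [hδ]; positivity
  have hcard : (Finset.univ.erase i).card = n - 1 :=
    by rw [Finset.card_erase_of_mem (Finset.mem_univ i), Finset.card_univ]
  have hsum : |∑ j ∈ Finset.univ.erase i, (y j - x j)| ≤ ((n : ℝ) - 1) * (2 * R) := by
    calc |∑ j ∈ Finset.univ.erase i, (y j - x j)|
        ≤ ∑ j ∈ Finset.univ.erase i, |y j - x j| := Finset.abs_sum_le_sum_abs _ _
      _ ≤ ∑ _j ∈ Finset.univ.erase i, (2 * R) := by
          apply Finset.sum_le_sum
          intro j _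
          calc |y j - x j| ≤ |y j| + |x j| := abs_sub _ _
            _ ≤ R + R := add_le_add (habs _ (hy j)) (habs _ (hx j))
            _ = 2 * R := by ring
      _ = ((n : ℝ) - 1) * (2 * R) := by
          rw [Finset.sum_const, nsmul_eq_mul, hcard, Nat.cast_sub (by omega)]
          norm_num
  have hkey : δ * ∑ j ∈ Finset.univ.erase i, (y j - x j) < d := by
    have h1 : δ * ∑ j ∈ Finset.univ.erase i, (y j - x j)
        ≤ δ * (((n : ℝ) - 1) * (2 * R)) :=
      mul_le_mul_of_nonneg_left (le_trans (le_abs_self _) hsum) hδpos.le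
    have h2 : δ * (((n : ℝ) - 1) * (2 * R)) < δ * (2 * (n : ℝ) * R) := by
      apply mul_lt_mul_of_pos_left _ hδpos
      nlinarith
    have h0 : (2 * (n : ℝ) * R) ≠ 0 := by positivity
    have h3 : δ * (2 * (n : ℝ) * R) = d := by
      rw [hδ, div_mul_cancel₀ _ h0]
    linarith
  have hsplit : ∑ j ∈ Finset.univ.erase i, (y j - x j)
      = ∑ j ∈ Finset.univ.erase i, y j - ∑ j ∈ Finset.univ.erase i, x j :=
    Finset.sum_sub_distrib _ _
  rw [hsplit, mul_sub] at hkey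
  linarith
end

section
/- Suppose every payoff function u_i takes values in a finite set M ⊂ ℝ with at least two elements, and let R = max_{m∈M} |m|, d = min{|m − m'| : m, m' ∈ M, m ≠ m'}, δ = d/(2·|N|·R), and u_i^δ(σ) = u_i(σ) − δ·∑_{j∈N, j≠i} u_j(σ). If σ* is a Nash equilibrium with respect to the payoff functions (u_i^δ)_{i∈N}, then σ* is a Nash equilibrium and moreover a sum-secure equilibrium (in particular a secure equilibrium) with respect to the original payoff functions (u_i)_{i∈N}. -/
/-- **The δ-transformation yields sum-secure equilibria**: suppose every payoff
function `u i` takes values in a finite set `M ⊆ ℝ` with at least two elements,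
let `R = max_{m∈M} |m|`, `d = min{|m−m'| : m,m' ∈ M, m ≠ m'}`, `δ = d/(2·|N|·R)`,
and `u^δ_i(σ) = u_i(σ) − δ·∑_{j≠i} u_j(σ)`.  If `σ*` is a Nash equilibrium with
respect to the payoffs `u^δ`, then `σ*` is a Nash equilibrium, a sum-secure
equilibrium, and a secure equilibrium with respect to the original payoffs `u`. -/
theorem nash_of_delta_game_is_sum_secure
    {N : Type*} [Fintype N] [DecidableEq N]
    (hN : 2 ≤ Fintype.card N)
    (St : N → Type*) [∀ i, Nonempty (St i)]
    (u : N → (∀ j, St j) → ℝ)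
    (M : Finset ℝ) (hM : 2 ≤ M.card)
    (hu : ∀ (i : N) (σ : ∀ j, St j), u i σ ∈ M)
    (R d δ : ℝ)
    (hR : R = sSup {x : ℝ | ∃ m ∈ M, x = |m|})
    (hd : d = sInf {x : ℝ | ∃ m ∈ M, ∃ m' ∈ M, m ≠ m' ∧ x = |m - m'|})
    (hδ : δ = d / (2 * (Fintype.card N : ℝ) * R))
    (uδ : N → (∀ j, St j) → ℝ)
    (huδ : ∀ (i : N) (σ : ∀ j, St j),
        uδ i σ = u i σ - δ * ∑ j ∈ Finset.univ.erase i, u j σ)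
    (σ : ∀ j, St j)
    (hnashδ : ∀ (i : N) (τi : St i), uδ i (Function.update σ i τi) ≤ uδ i σ) :
    -- `σ*` is a Nash equilibrium for the original payoffs
    (∀ (i : N) (τi : St i), u i (Function.update σ i τi) ≤ u i σ) ∧
    -- `σ*` is a sum-secure equilibrium for the original payoffs
    (∀ (i : N) (τi : St i),
        u i (Function.update σ i τi) = u i σ →
        ∑ j ∈ Finset.univ.erase i, u j σ ≤
          ∑ j ∈ Finset.univ.erase i, u j (Function.update σ i τi)) ∧
    -- `σ*` is a secure equilibrium for the original payoffs
    ¬ ∃ (i : N) (τi : St i),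
        u i (Function.update σ i τi) = u i σ ∧
        (∀ j : N, j ≠ i → u j (Function.update σ i τi) ≤ u j σ) ∧
        (∃ k : N, k ≠ i ∧ u k (Function.update σ i τi) < u k σ) := by
  classical
  set n := Fintype.card N with hn
  -- basic facts about M
  obtain ⟨a, ha, b, hb, hab⟩ := Finset.one_lt_card.mp hM
  -- the set for R
  set A : Set ℝ := {x : ℝ | ∃ m ∈ M, x = |m|} with hA
  have hAfin : A.Finite := by
    have : A ⊆ (fun m => |m|) '' (M : Set ℝ) := by
      rintro x ⟨m, hm, rfl⟩; exact ⟨m, hm, rfl⟩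
    exact Set.Finite.subset ((M.finite_toSet).image _) this
  have hAub : ∀ m ∈ M, |m| ≤ R := by
    intro m hm
    rw [hR]
    exact le_csSup hAfin.bddAbove ⟨m, hm, rfl⟩
  -- the set for d
  set B : Set ℝ := {x : ℝ | ∃ m ∈ M, ∃ m' ∈ M, m ≠ m' ∧ x = |m - m'|} with hB
  have hBfin : B.Finite := by
    have : B ⊆ (fun p : ℝ × ℝ => |p.1 - p.2|) '' ((M : Set ℝ) ×ˢ (M : Set ℝ)) := by
      rintro x ⟨m, hm, m', hm', hne, rfl⟩; exact ⟨(m, m'), ⟨hm, hm'⟩, rfl⟩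
    exact Set.Finite.subset (((M.finite_toSet).prod (M.finite_toSet)).image _) this
  have hBne : B.Nonempty := ⟨|a - b|, a, ha, b, hb, hab, rfl⟩
  have hdle : ∀ x ∈ B, d ≤ x := by
    intro x hx; rw [hd]; exact csInf_le hBfin.bddBelow hx
  have hdpos : 0 < d := by
    have hmem : d ∈ B := by rw [hd]; exact hBne.csInf_mem hBfin
    obtain ⟨m, hm, m', hm', hne, hx⟩ := hmem
    rw [hx]; exact abs_pos.mpr (sub_ne_zero.mpr hne)
  have hRpos : 0 < R := by
    rcases eq_or_ne a 0 with rfl | h0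
    · have := hAub b hb
      have : 0 < |b| := abs_pos.mpr (fun h => hab (h.symm ▸ rfl))
      linarith [hAub b hb]
    · have : 0 < |a| := abs_pos.mpr h0
      linarith [hAub a ha]
  have hnpos : (0:ℝ) < n := by
    have : (2:ℝ) ≤ n := by exact_mod_cast hN
    linarith
  have hδpos : 0 < δ := by
    rw [hδ]; positivity
  -- key inequalities for each i, τi
  have key : ∀ (i : N) (τi : St i),
      u i (Function.update σ i τi) - u i σ ≤
        δ * (∑ j ∈ Finset.univ.erase i, u j (Function.update σ i τi)
              - ∑ j ∈ Finset.univ.erase i, u j σ) := by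
    intro i τi
    have h := hnashδ i τi
    rw [huδ, huδ] at h
    linarith
  have sumbound : ∀ (i : N) (τi : St i),
      δ * (∑ j ∈ Finset.univ.erase i, u j (Function.update σ i τi)
            - ∑ j ∈ Finset.univ.erase i, u j σ) < d := by
    intro i τi
    have hcard : ((Finset.univ.erase i).card : ℝ) = (n : ℝ) - 1 := by
      rw [Finset.card_erase_of_mem (Finset.mem_univ i), Finset.card_univ]
      have h1 : 1 ≤ Fintype.card N := le_trans (by norm_num) hN
      push_cast [Nat.cast_sub h1]
      ring
    have hsum : ∑ j ∈ Finset.univ.erase i, u j (Function.update σ i τi)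
          - ∑ j ∈ Finset.univ.erase i, u j σ ≤ ((n : ℝ) - 1) * (2 * R) := by
      rw [← Finset.sum_sub_distrib, ← hcard]
      calc ∑ j ∈ Finset.univ.erase i, (u j (Function.update σ i τi) - u j σ)
          ≤ ∑ _j ∈ Finset.univ.erase i, (2 * R) := by
            apply Finset.sum_le_sum
            intro j _
            have h1 := abs_le.mp (hAub _ (hu j (Function.update σ i τi)))
            have h2 := abs_le.mp (hAub _ (hu j σ))
            linarith [h1.2, h2.1]
        _ = ((Finset.univ.erase i).card : ℝ) * (2 * R) := by
            rw [Finset.sum_const, nsmul_eq_mul]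
    have hδ2 : δ * (2 * (n:ℝ) * R) = d := by
      rw [hδ]; field_simp
    calc δ * (∑ j ∈ Finset.univ.erase i, u j (Function.update σ i τi)
            - ∑ j ∈ Finset.univ.erase i, u j σ)
        ≤ δ * (((n:ℝ) - 1) * (2 * R)) := by
          exact mul_le_mul_of_nonneg_left hsum hδpos.le
      _ < d := by nlinarith [mul_pos hδpos hRpos]
  -- Nash equilibrium
  have hnash : ∀ (i : N) (τi : St i), u i (Function.update σ i τi) ≤ u i σ := by
    intro i τi
    by_contra hlt
    push_neg at hlt
    have hne : u i (Function.update σ i τi) ≠ u i σ := ne_of_gt hlt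
    have hd_le : d ≤ |u i (Function.update σ i τi) - u i σ| :=
      hdle _ ⟨_, hu i (Function.update σ i τi), _, hu i σ, hne, rfl⟩
    rw [abs_of_pos (by linarith)] at hd_le
    have := key i τi
    have := sumbound i τi
    linarith
  -- sum-secure
  have hss : ∀ (i : N) (τi : St i),
      u i (Function.update σ i τi) = u i σ →
      ∑ j ∈ Finset.univ.erase i, u j σ ≤
        ∑ j ∈ Finset.univ.erase i, u j (Function.update σ i τi) := by
    intro i τi heq
    have h := hnashδ i τi
    rw [huδ, huδ, heq] at h
    have hle : δ * ∑ j ∈ Finset.univ.erase i, u j σ ≤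
        δ * ∑ j ∈ Finset.univ.erase i, u j (Function.update σ i τi) := by linarith
    exact le_of_mul_le_mul_left hle hδpos
  refine ⟨hnash, hss, ?_⟩
  rintro ⟨i, τi, heq, hall, k, hk, hklt⟩
  have hsum := hss i τi heq
  have hlt : ∑ j ∈ Finset.univ.erase i, u j (Function.update σ i τi) <
      ∑ j ∈ Finset.univ.erase i, u j σ := by
    apply Finset.sum_lt_sum
    · intro j hj
      exact hall j (Finset.ne_of_mem_erase hj)
    · exact ⟨k, Finset.mem_erase.mpr ⟨hk, Finset.mem_univ k⟩, hklt⟩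
  linarith
end
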